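/- arXiv:1701.03411 — 6 statements merged into one kernel-verified Lean document; each statement's English description precedes it below -/
import Mathlib

section
/- For every prime power q, the identity 1/(1 - q·x) = ∏_{d ≥ 1} (1 - x^d)^{-A(d)(q)} holds in the formal power series ring, where A(d)(q) = (1/d) ∑_{e | d} μ(d/e) q^e is the number of monic irreducible polynomials of degree d over F_q. -/
open PowerSeries

/-- The `(x)`-adic limit of the partial products `∏_{n ≤ N} f n`: this is the infinite product `∏_{n ≥ 0} f n` whenever the factor `f n` is `≡ 1 mod x^n`. -/
noncomputable def prodPS (f : ℕ → PowerSeries ℚ) : PowerSeries ℚ :=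
  PowerSeries.mk fun N => PowerSeries.coeff N (∏ n ∈ Finset.range (N + 1), f n)

/- ### Auxiliary lemmas -/

lemma ccoeff (d : ℕ) (hd : 1 ≤ d) :
    constantCoeff ((1 : PowerSeries ℚ) - X ^ d) = 1 := by
  simp [zero_pow (by omega : d ≠ 0)]

lemma dvd_sub_iff' (d n : ℕ) (h : d ≤ n) : d ∣ n ↔ d ∣ n - d := by
  constructor
  · intro h'; exact Nat.dvd_sub h' dvd_rfl
  · intro h'; have := Nat.dvd_add h' (dvd_refl d); rwa [Nat.sub_add_cancel h] at this

lemma geom (d : ℕ) (hd : 1 ≤ d) :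
    ((1 : PowerSeries ℚ) - X ^ d)⁻¹
      = PowerSeries.mk (fun n => if d ∣ n then (1 : ℚ) else 0) := by
  symm
  rw [PowerSeries.eq_inv_iff_mul_eq_one (by rw [ccoeff d hd]; norm_num)]
  ext n
  simp only [mul_sub, mul_one, map_sub, coeff_mul_X_pow', coeff_mk, coeff_one]
  by_cases h0 : n = 0
  · subst h0; simp [(show ¬ d ≤ 0 by omega)]
  · by_cases h2 : d ≤ n
    · rw [if_pos h2, if_neg h0]
      by_cases h1 : d ∣ n
      · rw [if_pos h1, if_pos ((dvd_sub_iff' d n h2).mp h1)]; ring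
      · rw [if_neg h1, if_neg (fun hh => h1 ((dvd_sub_iff' d n h2).mpr hh))]; ring
    · rw [if_neg h2, if_neg (fun hh => h2 (Nat.le_of_dvd (by omega) hh)), if_neg h0]; ring

lemma inv_sub_one (d : ℕ) (hd : 1 ≤ d) :
    ((1 : PowerSeries ℚ) - X ^ d)⁻¹ - 1 = X ^ d * ((1 : PowerSeries ℚ) - X ^ d)⁻¹ := by
  have huv : ((1 : PowerSeries ℚ) - X ^ d) * ((1 : PowerSeries ℚ) - X ^ d)⁻¹ = 1 :=
    PowerSeries.mul_inv_cancel _ (by rw [ccoeff d hd]; norm_num)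
  linear_combination huv

lemma pow_inv_sub_one_dvd (d n : ℕ) (hd : 1 ≤ d) :
    (X : PowerSeries ℚ) ^ d ∣ (((1 : PowerSeries ℚ) - X ^ d)⁻¹) ^ n - 1 := by
  have h1 : (X : PowerSeries ℚ) ^ d ∣ ((1 : PowerSeries ℚ) - X ^ d)⁻¹ - 1 :=
    ⟨((1 : PowerSeries ℚ) - X ^ d)⁻¹, inv_sub_one d hd⟩
  calc (X : PowerSeries ℚ) ^ d ∣ ((1 : PowerSeries ℚ) - X ^ d)⁻¹ - 1 := h1
    _ ∣ (((1 : PowerSeries ℚ) - X ^ d)⁻¹) ^ n - 1 := by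
        have := sub_dvd_pow_sub_pow (((1 : PowerSeries ℚ) - X ^ d)⁻¹) 1 n
        rwa [one_pow] at this

lemma coeff_prod_stable (g : ℕ → PowerSeries ℚ)
    (hg : ∀ d, 1 ≤ d → (X : PowerSeries ℚ) ^ d ∣ g d - 1) (k : ℕ) :
    ∀ M, k ≤ M → PowerSeries.coeff k (∏ n ∈ Finset.range (M + 1), g n)
      = PowerSeries.coeff k (∏ n ∈ Finset.range (k + 1), g n) := by
  intro M
  induction M with
  | zero => intro h; interval_cases k; rfl
  | succ M ih =>
    intro h
    rcases Nat.eq_or_lt_of_le h with h' | h'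
    · rw [h']
    · have hk : k ≤ M := by omega
      obtain ⟨r, hr⟩ := hg (M + 1) (by omega)
      have hgM : g (M + 1) = 1 + X ^ (M + 1) * r := by linear_combination hr
      rw [Finset.prod_range_succ, hgM]
      have : (∏ n ∈ Finset.range (M + 1), g n) * (1 + X ^ (M + 1) * r)
          = (∏ n ∈ Finset.range (M + 1), g n)
            + ((∏ n ∈ Finset.range (M + 1), g n) * r) * X ^ (M + 1) := by ring
      rw [this, map_add, coeff_mul_X_pow', if_neg (by omega), add_zero, ih hk]

lemma logderiv_pow (d n : ℕ) (hd : 1 ≤ d) :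
    X * (d⁄dX ℚ) ((((1 : PowerSeries ℚ) - X ^ d)⁻¹) ^ n)
      = (((d * n : ℕ) : PowerSeries ℚ) * (X ^ d * ((1 : PowerSeries ℚ) - X ^ d)⁻¹))
          * (((1 : PowerSeries ℚ) - X ^ d)⁻¹) ^ n := by
  have hDX : (d⁄dX ℚ) (X ^ d : PowerSeries ℚ) = (d : PowerSeries ℚ) * X ^ (d - 1) := by
    rw [Derivation.leibniz_pow, derivative_X, smul_eq_mul, mul_one, nsmul_eq_mul]
  have hDu : (d⁄dX ℚ) ((1 : PowerSeries ℚ) - X ^ d)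
      = -((d : PowerSeries ℚ) * X ^ (d - 1)) := by
    rw [map_sub, hDX]
    simp
  have hDv : (d⁄dX ℚ) (((1 : PowerSeries ℚ) - X ^ d)⁻¹)
      = (((1 : PowerSeries ℚ) - X ^ d)⁻¹) ^ 2 * ((d : PowerSeries ℚ) * X ^ (d - 1)) := by
    rw [PowerSeries.derivative_inv', hDu]; ring
  rw [Derivation.leibniz_pow, hDv, smul_eq_mul, nsmul_eq_mul]
  rcases n with _ | m
  · simp
  · have hX : (X : PowerSeries ℚ) * X ^ (d - 1) = X ^ d := by
      rw [← pow_succ']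
      congr 1
      omega
    simp only [Nat.add_sub_cancel]
    push_cast
    linear_combination ((m : PowerSeries ℚ) + 1) * (d : PowerSeries ℚ) *
      (((1 : PowerSeries ℚ) - X ^ d)⁻¹) ^ (m + 2) * hX

lemma logderiv_prod (s : Finset ℕ) (g H : ℕ → PowerSeries ℚ)
    (h : ∀ d ∈ s, X * (d⁄dX ℚ) (g d) = H d * g d) :
    X * (d⁄dX ℚ) (∏ d ∈ s, g d) = (∑ d ∈ s, H d) * ∏ d ∈ s, g d := by
  induction s using Finset.cons_induction with
  | empty => simp
  | cons a s ha ih =>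
    have ih' := ih (fun d hd => h d (Finset.mem_cons_of_mem hd))
    have hha := h a (Finset.mem_cons_self a s)
    rw [Finset.prod_cons, Finset.sum_cons, Derivation.leibniz, smul_eq_mul, smul_eq_mul]
    linear_combination (g a) * ih' + (∏ d ∈ s, g d) * hha

noncomputable def HH (A : ℕ → ℕ) (d : ℕ) : PowerSeries ℚ :=
  if d = 0 then 0
  else ((d * A d : ℕ) : PowerSeries ℚ) * (X ^ d * ((1 : PowerSeries ℚ) - X ^ d)⁻¹)

lemma coeff_HH (A : ℕ → ℕ) (d m : ℕ) (hm : 1 ≤ m) :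
    PowerSeries.coeff m (HH A d)
      = if d ∈ m.divisors then ((d * A d : ℕ) : ℚ) else 0 := by
  rcases Nat.eq_zero_or_pos d with hd | hd
  · subst hd
    have : (0 : ℕ) ∉ m.divisors := by simp [Nat.mem_divisors]
    simp [HH, this]
  · rw [HH, if_neg (by omega), show ((d * A d : ℕ) : PowerSeries ℚ)
        = PowerSeries.C ((d * A d : ℕ) : ℚ) from (map_natCast (PowerSeries.C) _).symm,
      coeff_C_mul, geom d hd, mul_comm ((X : PowerSeries ℚ) ^ d), coeff_mul_X_pow', coeff_mk]
    by_cases h2 : d ≤ m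
    · rw [if_pos h2]
      by_cases h1 : d ∣ m
      · rw [if_pos ((dvd_sub_iff' d m h2).mp h1), if_pos (Nat.mem_divisors.mpr ⟨h1, by omega⟩)]
        ring
      · rw [if_neg (fun hh => h1 ((dvd_sub_iff' d m h2).mpr hh)),
            if_neg (fun hh => h1 (Nat.mem_divisors.mp hh).1)]
        ring
    · rw [if_neg h2, if_neg (fun hh => h2 (Nat.le_of_dvd (by omega) (Nat.mem_divisors.mp hh).1))]
      ring

lemma coeff_HH_zero (A : ℕ → ℕ) (d : ℕ) :
    PowerSeries.coeff 0 (HH A d) = 0 := by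
  rcases Nat.eq_zero_or_pos d with hd | hd
  · subst hd; simp [HH]
  · rw [HH, if_neg (by omega), show ((d * A d : ℕ) : PowerSeries ℚ)
        = PowerSeries.C ((d * A d : ℕ) : ℚ) from (map_natCast (PowerSeries.C) _).symm,
      coeff_C_mul, mul_comm ((X : PowerSeries ℚ) ^ d), coeff_mul_X_pow',
      if_neg (by omega : ¬ d ≤ 0), mul_zero]

lemma coeff_sum_HH (A : ℕ → ℕ) (N m : ℕ) (hm : 1 ≤ m) (hmN : m ≤ N) :
    PowerSeries.coeff m (∑ d ∈ Finset.range (N + 1), HH A d)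
      = ∑ d ∈ m.divisors, (d : ℚ) * A d := by
  rw [map_sum]
  rw [Finset.sum_congr rfl (fun d _ => coeff_HH A d m hm)]
  rw [Finset.sum_ite_mem]
  rw [Finset.inter_eq_right.mpr (fun d hd => Finset.mem_range.mpr
    (by have := Nat.divisor_le hd; omega))]
  exact Finset.sum_congr rfl (fun d _ => by push_cast; ring)

lemma divisor_sum (q : ℕ) (A : ℕ → ℕ)
    (hA : ∀ d : ℕ, 1 ≤ d → (d : ℚ) * A d =
      ∑ e ∈ d.divisors, (ArithmeticFunction.moebius (d / e) : ℚ) * (q : ℚ) ^ e) :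
    ∀ m : ℕ, 1 ≤ m → ∑ d ∈ m.divisors, (d : ℚ) * (A d : ℚ) = (q : ℚ) ^ m := by
  intro m hm
  refine (ArithmeticFunction.sum_eq_iff_sum_mul_moebius_eq
    (f := fun d : ℕ => (d : ℚ) * (A d : ℚ)) (g := fun n => (q : ℚ) ^ n)).mpr ?_ m (by omega)
  intro n hn
  rw [Nat.sum_divisorsAntidiagonal'
    (f := fun a b => ((ArithmeticFunction.moebius a : ℤ) : ℚ) * (q : ℚ) ^ b)]
  exact (hA n (by omega)).symm

/-- For a prime power q, `1/(1 - q x) = ∏_{d ≥ 1} (1 - x^d)^{-A(d)(q)}` where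
`A(d)(q) = (1/d) ∑_{e ∣ d} μ(d/e) q^e` is the number of monic irreducible
polynomials of degree d over F_q. -/
theorem stmt_4 (q : ℕ) (hq : IsPrimePow q) (A : ℕ → ℕ)
    (hA : ∀ d : ℕ, 1 ≤ d → (d : ℚ) * A d =
      ∑ e ∈ d.divisors, (ArithmeticFunction.moebius (d / e) : ℚ) * (q : ℚ) ^ e) :
    ((1 : PowerSeries ℚ) - PowerSeries.C (q : ℚ) * PowerSeries.X)⁻¹ =
      prodPS (fun d => if d = 0 then 1 else
        (((1 : PowerSeries ℚ) - PowerSeries.X ^ d)⁻¹) ^ A d) := by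
  set g : ℕ → PowerSeries ℚ := fun d => if d = 0 then 1 else
    (((1 : PowerSeries ℚ) - PowerSeries.X ^ d)⁻¹) ^ A d with hg
  have hgdvd : ∀ d, 1 ≤ d → (X : PowerSeries ℚ) ^ d ∣ g d - 1 := by
    intro d hd
    rw [hg]
    simp only [if_neg (by omega : ¬ d = 0)]
    exact pow_inv_sub_one_dvd d (A d) hd
  have hdiv := divisor_sum q A hA
  have key : ∀ N, PowerSeries.coeff N (∏ n ∈ Finset.range (N + 1), g n) = (q : ℚ) ^ N := by
    intro N
    induction N using Nat.strong_induction_on with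
    | _ N ih =>
      rcases Nat.eq_zero_or_pos N with h0 | hN
      · subst h0; simp [hg]
      · obtain ⟨M, rfl⟩ : ∃ M, N = M + 1 := ⟨N - 1, by omega⟩
        have hld : X * (d⁄dX ℚ) (∏ n ∈ Finset.range (M + 1 + 1), g n)
            = (∑ d ∈ Finset.range (M + 1 + 1), HH A d)
              * ∏ n ∈ Finset.range (M + 1 + 1), g n := by
          apply logderiv_prod
          intro d _
          rcases Nat.eq_zero_or_pos d with h | h
          · subst h; simp [hg, HH]
          · rw [hg]
            simp only [if_neg (by omega : ¬ d = 0)]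
            rw [HH, if_neg (by omega : ¬ d = 0)]
            exact logderiv_pow d (A d) h
        have hcoeff := congrArg (PowerSeries.coeff (M + 1)) hld
        rw [coeff_succ_X_mul, coeff_derivative, coeff_mul,
          Finset.Nat.sum_antidiagonal_eq_sum_range_succ_mk] at hcoeff
        have hsum : ∑ k ∈ Finset.range (M + 1 + 1),
            PowerSeries.coeff k (∑ d ∈ Finset.range (M + 1 + 1), HH A d)
              * PowerSeries.coeff (M + 1 - k) (∏ n ∈ Finset.range (M + 1 + 1), g n)
            = ((M : ℚ) + 1) * (q : ℚ) ^ (M + 1) := by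
          rw [Finset.sum_range_succ']
          have h0' : PowerSeries.coeff 0 (∑ d ∈ Finset.range (M + 1 + 1), HH A d) = 0 := by
            rw [map_sum]
            exact Finset.sum_eq_zero (fun d _ => coeff_HH_zero A d)
          rw [h0', zero_mul, add_zero]
          have hterm : ∀ k ∈ Finset.range (M + 1),
              PowerSeries.coeff (k + 1) (∑ d ∈ Finset.range (M + 1 + 1), HH A d)
                * PowerSeries.coeff (M + 1 - (k + 1)) (∏ n ∈ Finset.range (M + 1 + 1), g n)
              = (q : ℚ) ^ (M + 1) := by
            intro k hk
            have hkM : k ≤ M := by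
              have := Finset.mem_range.mp hk; omega
            rw [coeff_sum_HH A (M + 1) (k + 1) (by omega) (by omega),
              hdiv (k + 1) (by omega)]
            have hsub : M + 1 - (k + 1) = M - k := by omega
            rw [hsub, coeff_prod_stable g hgdvd (M - k) (M + 1) (by omega),
              ih (M - k) (by omega), ← pow_add]
            congr 1
            omega
          rw [Finset.sum_congr rfl hterm, Finset.sum_const, Finset.card_range, nsmul_eq_mul]
          push_cast
          ring
        rw [hsum] at hcoeff
        have hne : ((M : ℚ) + 1) ≠ 0 := by positivity
        rw [mul_comm] at hcoeff
        exact mul_left_cancel₀ hne hcoeff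
  symm
  rw [PowerSeries.eq_inv_iff_mul_eq_one (by simp)]
  ext n
  have hco : ∀ m, PowerSeries.coeff m (prodPS g) = (q : ℚ) ^ m := by
    intro m
    rw [prodPS, coeff_mk]
    exact key m
  rw [mul_sub, mul_one, map_sub, coeff_one]
  have h2 : prodPS g * (PowerSeries.C (q : ℚ) * X)
      = PowerSeries.C (q : ℚ) * (X * prodPS g) := by ring
  rw [h2, coeff_C_mul]
  cases n with
  | zero =>
    rw [hco 0]
    simp [coeff_zero_eq_constantCoeff]
  | succ m =>
    rw [coeff_succ_X_mul, hco (m + 1), hco m, if_neg (by omega)]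
    ring
end

section
/- Define formal power series F_r(x) over ℚ by F_1(x) = 1 - x and F_{r+1}(x) = F_r(qx)/F_r(x) for r ≥ 1, where q is a fixed rational number. Then F_r(x) = exp(-∑_{n ≥ 1} (q^n - 1)^{r-1} x^n / n) for all r ≥ 1. -/
open PowerSeries

/-- The formal exponential `exp f = ∑ₖ f^k / k!` of a power series `f` (with zero constant term). -/
noncomputable def expPS (f : PowerSeries ℚ) : PowerSeries ℚ :=
  PowerSeries.mk fun n =>
    ∑ k ∈ Finset.range (n + 1), (PowerSeries.coeff n (f ^ k)) / (Nat.factorial k)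

/-- The series `∑_{n ≥ 1} a n * x^n / n`. -/
noncomputable def serA (a : ℕ → ℚ) : PowerSeries ℚ :=
  PowerSeries.mk fun n => if n = 0 then 0 else a n / n

open Finset in
lemma coeff_pow_zero_of_lt {f : ℚ⟦X⟧} (hf : constantCoeff f = 0) {m k : ℕ} (h : m < k) :
    PowerSeries.coeff m (f ^ k) = 0 := by
  obtain ⟨g, rfl⟩ := PowerSeries.X_dvd_iff.mpr hf
  rw [mul_pow, PowerSeries.coeff_X_pow_mul', if_neg (by omega)]

lemma coeff_expPS (f : ℚ⟦X⟧) (n : ℕ) :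
    PowerSeries.coeff n (expPS f) =
      ∑ k ∈ Finset.range (n + 1), (PowerSeries.coeff n (f ^ k)) / (Nat.factorial k) := by
  simp [expPS]

lemma coeff_expPS' {f : ℚ⟦X⟧} (hf : constantCoeff f = 0) {n N : ℕ} (h : n ≤ N) :
    PowerSeries.coeff n (expPS f) =
      ∑ k ∈ Finset.range (N + 1), (PowerSeries.coeff n (f ^ k)) / (Nat.factorial k) := by
  rw [coeff_expPS]
  refine Finset.sum_subset (Finset.range_subset_range.mpr (by omega)) ?_
  intro k hk hk'
  simp only [Finset.mem_range, not_lt] at hk'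
  rw [coeff_pow_zero_of_lt hf (by omega), zero_div]

lemma constantCoeff_expPS (f : ℚ⟦X⟧) : constantCoeff (expPS f) = 1 := by
  have := coeff_expPS f 0
  simp only [zero_add, Finset.sum_range_one, Finset.range_one, Finset.sum_singleton, pow_zero] at this
  simpa [← PowerSeries.coeff_zero_eq_constantCoeff] using this

lemma derivative_expPS {f : ℚ⟦X⟧} (hf : constantCoeff f = 0) :
    d⁄dX ℚ (expPS f) = (d⁄dX ℚ f) * expPS f := by
  ext n
  rw [PowerSeries.coeff_derivative, PowerSeries.coeff_mul]
  have key : ∀ k : ℕ, PowerSeries.coeff (n+1) (f ^ (k+1)) * (n+1) =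
      (k+1) * PowerSeries.coeff n ((d⁄dX ℚ f) * f ^ k) := by
    intro k
    have hD : d⁄dX ℚ (f ^ (k+1)) = (k+1 : ℕ) • (f ^ k * d⁄dX ℚ f) := by
      set_option linter.unnecessarySimpa false in
      simpa [smul_smul] using Derivation.leibniz_pow (d⁄dX ℚ) f (k+1)
    have := congrArg (PowerSeries.coeff n) hD
    rw [PowerSeries.coeff_derivative, map_nsmul, nsmul_eq_mul] at this
    rw [this, mul_comm (f ^ k)]
    push_cast
    ring
  have hA : PowerSeries.coeff (n+1) (expPS f) * (n+1) =
      ∑ k ∈ Finset.range (n+1), PowerSeries.coeff n ((d⁄dX ℚ f) * f ^ k) / k.factorial := by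
    rw [coeff_expPS, Finset.sum_mul, Finset.sum_range_succ']
    simp only [pow_zero, PowerSeries.coeff_one, Nat.factorial_zero, Nat.cast_one]
    rw [if_neg (by omega), zero_div, zero_mul, add_zero]
    refine Finset.sum_congr rfl fun k hk => ?_
    have hfact : ((k+1).factorial : ℚ) = ((k:ℚ)+1) * k.factorial := by
      rw [Nat.factorial_succ]; push_cast; ring
    have hk1 : ((k:ℚ)+1) ≠ 0 := by positivity
    have hkf : (k.factorial : ℚ) ≠ 0 := by exact_mod_cast k.factorial_ne_zero
    rw [div_mul_eq_mul_div, key k, hfact]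
    field_simp
  rw [hA]
  have hB : ∀ p ∈ Finset.HasAntidiagonal.antidiagonal n,
      PowerSeries.coeff p.1 (d⁄dX ℚ f) * PowerSeries.coeff p.2 (expPS f)
      = ∑ k ∈ Finset.range (n+1),
          PowerSeries.coeff p.1 (d⁄dX ℚ f) * PowerSeries.coeff p.2 (f^k) / k.factorial := by
    intro p hp
    rw [coeff_expPS' hf (show p.2 ≤ n by have := Finset.HasAntidiagonal.mem_antidiagonal.mp hp; omega),
      Finset.mul_sum]
    simp [mul_div_assoc]
  rw [Finset.sum_congr rfl hB, Finset.sum_comm]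
  refine Finset.sum_congr rfl fun k hk => ?_
  rw [PowerSeries.coeff_mul, Finset.sum_div]


lemma ode_unique (h g1 g2 : ℚ⟦X⟧)
    (h0 : PowerSeries.coeff 0 g1 = PowerSeries.coeff 0 g2)
    (h1 : d⁄dX ℚ g1 = h * g1) (h2 : d⁄dX ℚ g2 = h * g2) : g1 = g2 := by
  ext n
  induction n using Nat.strong_induction_on with
  | _ n ih =>
    match n with
    | 0 => exact h0
    | Nat.succ n =>
      have e1 := congrArg (PowerSeries.coeff n) h1
      have e2 := congrArg (PowerSeries.coeff n) h2
      rw [PowerSeries.coeff_derivative, PowerSeries.coeff_mul] at e1 e2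
      have hs : ∑ p ∈ Finset.HasAntidiagonal.antidiagonal n,
            PowerSeries.coeff p.1 h * PowerSeries.coeff p.2 g1
          = ∑ p ∈ Finset.HasAntidiagonal.antidiagonal n,
            PowerSeries.coeff p.1 h * PowerSeries.coeff p.2 g2 := by
        refine Finset.sum_congr rfl fun p hp => ?_
        have hp2 : p.2 < n + 1 := by
          have := Finset.HasAntidiagonal.mem_antidiagonal.mp hp; omega
        rw [ih p.2 hp2]
      have := e1.trans (hs.trans e2.symm)
      have hn : ((n:ℚ)+1) ≠ 0 := by positivity
      exact mul_right_cancel₀ (by exact_mod_cast hn) this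

lemma expPS_add {f g : ℚ⟦X⟧} (hf : constantCoeff f = 0) (hg : constantCoeff g = 0) :
    expPS (f + g) = expPS f * expPS g := by
  apply ode_unique (d⁄dX ℚ (f + g))
  · simp [PowerSeries.coeff_zero_eq_constantCoeff, constantCoeff_expPS]
  · exact derivative_expPS (by simp [hf, hg])
  · rw [Derivation.leibniz, smul_eq_mul, smul_eq_mul, derivative_expPS hf, derivative_expPS hg,
      map_add]
    ring

lemma expPS_zero : expPS (0 : ℚ⟦X⟧) = 1 := by
  ext n
  rw [coeff_expPS, Finset.sum_eq_single 0]
  · simp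
  · intro k hk hk0
    rw [zero_pow hk0]; simp
  · simp

lemma expPS_inv {f : ℚ⟦X⟧} (hf : constantCoeff f = 0) : (expPS f)⁻¹ = expPS (-f) := by
  rw [PowerSeries.inv_eq_iff_mul_eq_one (by rw [constantCoeff_expPS]; exact one_ne_zero),
    ← expPS_add (by simp [hf]) hf]
  simp [expPS_zero]

lemma rescale_expPS (c : ℚ) (f : ℚ⟦X⟧) : rescale c (expPS f) = expPS (rescale c f) := by
  ext n
  rw [PowerSeries.coeff_rescale, coeff_expPS, coeff_expPS, Finset.mul_sum]
  refine Finset.sum_congr rfl fun k _ => ?_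
  rw [← map_pow, PowerSeries.coeff_rescale]
  ring

lemma constantCoeff_serA (a : ℕ → ℚ) : constantCoeff (serA a) = 0 := by
  simp [serA, PowerSeries.constantCoeff_mk]

lemma rescale_serA (c : ℚ) (a : ℕ → ℚ) :
    rescale c (serA a) = serA (fun n => c ^ n * a n) := by
  ext n
  rw [PowerSeries.coeff_rescale]
  simp only [serA, PowerSeries.coeff_mk]
  split_ifs with h
  · simp
  · ring

lemma serA_neg (a : ℕ → ℚ) : -serA a = serA (fun n => -a n) := by
  ext n
  simp only [map_neg, serA, PowerSeries.coeff_mk]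
  split_ifs with h <;> simp [neg_div]

lemma serA_add (a b : ℕ → ℚ) : serA a + serA b = serA (fun n => a n + b n) := by
  ext n
  simp only [map_add, serA, PowerSeries.coeff_mk]
  split_ifs with h
  · simp
  · rw [add_div]

lemma serA_congr {a b : ℕ → ℚ} (h : ∀ n, a n = b n) : serA a = serA b := by
  ext n; simp only [serA, PowerSeries.coeff_mk, h]

lemma base_case : (1 - PowerSeries.X : ℚ⟦X⟧) = expPS (serA fun _ => -1) := by
  have hder : d⁄dX ℚ (serA fun _ => (-1:ℚ)) = PowerSeries.mk fun _ => (-1:ℚ) := by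
    ext n
    rw [PowerSeries.coeff_derivative, PowerSeries.coeff_mk]
    simp only [serA, PowerSeries.coeff_mk, if_neg (Nat.succ_ne_zero n)]
    have : ((n:ℚ)+1) ≠ 0 := by positivity
    push_cast
    field_simp
  have hmul : (PowerSeries.mk fun _ => (-1:ℚ)) * (1 - PowerSeries.X) = -1 := by
    rw [mul_sub, mul_one]
    ext n
    cases n with
    | zero =>
      simp [PowerSeries.coeff_zero_mul_X, PowerSeries.coeff_mk]
    | succ n =>
      simp [PowerSeries.coeff_succ_mul_X, PowerSeries.coeff_mk, PowerSeries.coeff_one]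
  apply ode_unique (d⁄dX ℚ (serA fun _ => (-1:ℚ)))
  · simp [constantCoeff_expPS]
  · rw [hder, hmul]
    simp [map_sub]
  · exact derivative_expPS (constantCoeff_serA _)

/-- If `F 1 = 1 - x` and `F (r+1) = F r (q x) / F r (x)` then
`F r = exp (-∑_{n ≥ 1} (q^n - 1)^(r-1) x^n / n)` for all `r ≥ 1`. -/
theorem stmt_9 (q : ℚ) (F : ℕ → PowerSeries ℚ)
    (hF1 : F 1 = 1 - PowerSeries.X)
    (hrec : ∀ r : ℕ, 1 ≤ r → F (r + 1) = PowerSeries.rescale q (F r) * (F r)⁻¹) :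
    ∀ r : ℕ, 1 ≤ r → F r = expPS (serA fun n => -((q ^ n - 1) ^ (r - 1))) := by
  intro r hr
  induction r with
  | zero => omega
  | succ r ih =>
    rcases Nat.lt_or_ge r 1 with h1 | hr'
    · have : r = 0 := by omega
      subst this
      rw [hF1, base_case]
      exact congrArg expPS (serA_congr fun n => by simp)
    · rw [hrec r hr', ih hr']
      rw [rescale_expPS, rescale_serA, expPS_inv (constantCoeff_serA _), serA_neg,
        ← expPS_add (constantCoeff_serA _) (constantCoeff_serA _), serA_add]
      refine congrArg expPS (serA_congr fun n => ?_)
      have hpow : (q ^ n - 1) ^ r = (q ^ n - 1) ^ (r - 1) * (q ^ n - 1) := by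
        conv_lhs => rw [← Nat.sub_add_cancel hr']
        rw [pow_succ]
      simp only [Nat.add_sub_cancel, hpow]
      ring
end

section
/- Define F_r(x) ∈ ℤ[q][[x]] by F_1(x) = 1 - x and F_{r+1}(x) = F_r(qx)/F_r(x). Then for every r ≥ 1, every coefficient of F_r(x) - 1 is divisible by (q-1)^{r-1} in the polynomial ring ℤ[q]. -/
/-- Define `F r ∈ ℤ[q][[x]]` by `F 1 = 1 - x` and `F (r+1) = F r (qx)/F r (x)`.
Then every coefficient of `F r - 1` is divisible by `(q-1)^(r-1)` in `ℤ[q]`. -/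
theorem stmt_11 (F : ℕ → PowerSeries (Polynomial ℤ))
    (hF1 : F 1 = 1 - PowerSeries.X)
    (hrec : ∀ r : ℕ, 1 ≤ r →
      F (r + 1) * F r = PowerSeries.rescale (Polynomial.X) (F r)) :
    ∀ r : ℕ, 1 ≤ r → ∀ n : ℕ,
      ((Polynomial.X : Polynomial ℤ) - 1) ^ (r - 1) ∣
        PowerSeries.coeff (R := Polynomial ℤ) n (F r - 1) := by
  have hconst : ∀ r : ℕ, 1 ≤ r →
      PowerSeries.constantCoeff (R := Polynomial ℤ) (F r) = 1 := by
    intro r hr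
    induction r, hr using Nat.le_induction with
    | base => simp [hF1]
    | succ r hr ih =>
      have h := congrArg (PowerSeries.constantCoeff (R := Polynomial ℤ)) (hrec r hr)
      rw [map_mul, ih, mul_one] at h
      have h2 : PowerSeries.constantCoeff (R := Polynomial ℤ)
          (PowerSeries.rescale (Polynomial.X) (F r)) =
          PowerSeries.constantCoeff (R := Polynomial ℤ) (F r) := by
        rw [← PowerSeries.coeff_zero_eq_constantCoeff, PowerSeries.coeff_rescale]
        simp
      rw [h2, ih] at h
      exact h
  intro r hr
  induction r, hr using Nat.le_induction with
  | base => intro n; simpa using one_dvd _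
  | succ r hr ih =>
    intro n
    simp only [Nat.add_sub_cancel]
    set d : Polynomial ℤ := (Polynomial.X - 1) ^ r with hd
    set I : Ideal (Polynomial ℤ) := Ideal.span {d}
    set π : Polynomial ℤ →+* (Polynomial ℤ) ⧸ I := Ideal.Quotient.mk I
    -- the rescaled difference has all coefficients divisible by d
    have hG : ∀ m : ℕ, d ∣ PowerSeries.coeff (R := Polynomial ℤ) m
        (PowerSeries.rescale (Polynomial.X) (F r) - F r) := by
      intro m
      rw [map_sub, PowerSeries.coeff_rescale]
      have : (Polynomial.X : Polynomial ℤ) ^ m *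
          PowerSeries.coeff (R := Polynomial ℤ) m (F r) -
          PowerSeries.coeff (R := Polynomial ℤ) m (F r) =
          (Polynomial.X ^ m - 1) * PowerSeries.coeff (R := Polynomial ℤ) m (F r) := by
        ring
      rw [this]
      rcases Nat.eq_zero_or_pos m with hm | hm
      · subst hm; simp
      · have h1 : (Polynomial.X : Polynomial ℤ) - 1 ∣ Polynomial.X ^ m - 1 := by
          simpa using sub_dvd_pow_sub_pow (Polynomial.X : Polynomial ℤ) 1 m
        have h2 : ((Polynomial.X : Polynomial ℤ) - 1) ^ (r - 1) ∣
            PowerSeries.coeff (R := Polynomial ℤ) m (F r) := by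
          have := ih m
          rwa [map_sub, PowerSeries.coeff_one, if_neg (by omega), sub_zero] at this
        have : ((Polynomial.X : Polynomial ℤ) - 1) ^ (1 + (r - 1)) ∣
            (Polynomial.X ^ m - 1) * PowerSeries.coeff (R := Polynomial ℤ) m (F r) := by
          rw [pow_add, pow_one]
          exact mul_dvd_mul h1 h2
        rwa [show 1 + (r - 1) = r by omega] at this
    -- work modulo d
    have hmap0 : PowerSeries.map π (PowerSeries.rescale (Polynomial.X) (F r) - F r)
        = 0 := by
      ext m
      rw [PowerSeries.coeff_map, map_zero]
      exact Ideal.Quotient.eq_zero_iff_mem.2 (Ideal.mem_span_singleton.2 (hG m))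
    have hmul : PowerSeries.map π (F (r + 1) - 1) * PowerSeries.map π (F r) = 0 := by
      rw [← map_mul, sub_mul, one_mul, hrec r hr]
      exact hmap0
    have hunit : IsUnit (PowerSeries.map π (F r)) := by
      rw [PowerSeries.isUnit_iff_constantCoeff, ← PowerSeries.coeff_zero_eq_constantCoeff,
        PowerSeries.coeff_map, PowerSeries.coeff_zero_eq_constantCoeff, hconst r hr, map_one]
      exact isUnit_one
    have hzero : PowerSeries.map π (F (r + 1) - 1) = 0 := by
      rcases hunit with ⟨u, hu⟩
      have := congrArg (· * (↑u⁻¹ : (PowerSeries ((Polynomial ℤ) ⧸ I)))) hmul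
      simpa [← hu, mul_assoc] using this
    have := congrArg (PowerSeries.coeff n) hzero
    rw [PowerSeries.coeff_map, map_zero] at this
    exact Ideal.mem_span_singleton.1 (Ideal.Quotient.eq_zero_iff_mem.1 this)
end

section
/- Let p be a prime and P_p(x) = ∏_{n ≥ 0} (1 - x^{p^n})^{-1}. Then log P_p(x) = (1/(p-1)) ∑_{n ≥ 1} (p·n_p - 1) x^n / n as formal power series over ℚ, where n_p is the p-part of n. -/
open PowerSeries

/-- The formal logarithm `log f = ∑ₖ (-1)^(k+1) (f-1)^k / k` of a power series `f` (with constant term `1`). -/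
noncomputable def logPS (f : PowerSeries ℚ) : PowerSeries ℚ :=
  PowerSeries.mk fun n =>
    ∑ k ∈ Finset.range (n + 1), (-1 : ℚ) ^ (k + 1) * (PowerSeries.coeff n ((f - 1) ^ k)) / k

/-- The generating function `P_p(x) = ∏_{n ≥ 0} (1 - x^(p^n))⁻¹` for partitions into powers of `p`. -/
noncomputable def partitionProd (p : ℕ) : PowerSeries ℚ :=
  prodPS fun n => ((1 : PowerSeries ℚ) - PowerSeries.X ^ (p ^ n))⁻¹

lemma coeff_logPS (f : PowerSeries ℚ) (n : ℕ) : coeff n (logPS f) =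
    ∑ k ∈ Finset.range (n + 1), (-1 : ℚ) ^ (k + 1) * (coeff n ((f - 1) ^ k)) / k := by
  simp [logPS]

lemma coeff_logPS' (f : PowerSeries ℚ) (n : ℕ) : coeff n (logPS f) =
    -∑ k ∈ Finset.range (n + 1), (coeff (R := ℚ) n ((1 - f) ^ k)) / k := by
  rw [coeff_logPS, ← Finset.sum_neg_distrib]
  refine Finset.sum_congr rfl fun k _ => ?_
  have h1 : ((1 : PowerSeries ℚ) - f) ^ k = ((-1 : ℚ) ^ k) • (f - 1) ^ k := by
    rw [← smul_pow]
    congr 1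
    simp
  rw [h1, map_smul, smul_eq_mul]
  rw [pow_succ]
  ring

lemma constantCoeff_logPS (f : PowerSeries ℚ) : constantCoeff (logPS f) = 0 := by
  rw [← coeff_zero_eq_constantCoeff_apply, coeff_logPS]
  simp

lemma X_dvd_one_sub {f : PowerSeries ℚ} (hf : constantCoeff f = 1) :
    (X : PowerSeries ℚ) ∣ (1 - f) := by
  rw [X_dvd_iff]; simp [hf]

lemma coeff_one_sub_pow {f : PowerSeries ℚ} (hf : constantCoeff f = 1) {n k : ℕ}
    (h : n < k) : coeff n ((1 - f) ^ k) = 0 := by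
  have : (X : PowerSeries ℚ) ^ k ∣ (1 - f) ^ k := pow_dvd_pow_of_dvd (X_dvd_one_sub hf) k
  exact X_pow_dvd_iff.mp this n h

lemma coeff_Df_mul_pow (f : PowerSeries ℚ) (j m : ℕ) :
    coeff (R := ℚ) m ((d⁄dX ℚ) f * (1 - f) ^ j) =
      -(coeff (R := ℚ) (m + 1) ((1 - f) ^ (j + 1)) * (m + 1) / (j + 1)) := by
  have h1 : (d⁄dX ℚ) ((1 - f) ^ (j + 1)) =
      -((j + 1) • ((d⁄dX ℚ) f * (1 - f) ^ j)) := by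
    rw [Derivation.leibniz_pow]
    have hd : (d⁄dX ℚ) (1 - f) = -(d⁄dX ℚ) f := by
      rw [map_sub]; simp
    rw [hd, Nat.add_sub_cancel]
    simp only [smul_eq_mul, smul_neg, mul_neg]
    rw [mul_comm]
  have h2 := coeff_derivative ((1 - f) ^ (j + 1)) m
  rw [h1] at h2
  simp only [map_neg, map_nsmul] at h2
  simp only [nsmul_eq_mul] at h2
  have hj : ((j : ℚ) + 1) ≠ 0 := by positivity
  field_simp
  push_cast at h2 ⊢
  linarith [h2]

lemma mul_derivative_logPS {f : PowerSeries ℚ} (hf : constantCoeff f = 1) :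
    f * (d⁄dX ℚ) (logPS f) = (d⁄dX ℚ) f := by
  ext n
  set S : PowerSeries ℚ := ∑ j ∈ Finset.range (n + 1), (1 - f) ^ j with hS
  have hcoe : ∀ m, m < n + 1 →
      coeff m ((d⁄dX ℚ) (logPS f)) = coeff m ((d⁄dX ℚ) f * S) := by
    intro m hm
    rw [coeff_derivative, coeff_logPS']
    have hR : coeff m ((d⁄dX ℚ) f * S) =
        ∑ j ∈ Finset.range (n + 1), coeff m ((d⁄dX ℚ) f * (1 - f) ^ j) := by
      rw [hS, Finset.mul_sum, map_sum]
    rw [hR]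
    rw [Finset.sum_congr rfl (fun j _ => coeff_Df_mul_pow f j m)]
    rw [← Finset.sum_subset (Finset.range_subset_range.mpr hm) (by
      intro j _ hj
      simp only [Finset.mem_range, not_lt] at hj
      rw [coeff_one_sub_pow hf (by omega)]
      simp)]
    rw [Finset.sum_range_succ']
    have h0 : coeff (R := ℚ) (m + 1) ((1 - f) ^ 0) / (0 : ℕ) = 0 := by
      simp
    rw [h0, add_zero, neg_mul, Finset.sum_mul, ← Finset.sum_neg_distrib]
    refine Finset.sum_congr rfl fun i _ => ?_
    push_cast
    ring
  have hdvd : (X : PowerSeries ℚ) ^ (n + 1) ∣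
      ((d⁄dX ℚ) (logPS f) - (d⁄dX ℚ) f * S) :=
    X_pow_dvd_iff.mpr fun m hm => by rw [map_sub, hcoe m hm, sub_self]
  have hz : coeff n (f * ((d⁄dX ℚ) (logPS f) - (d⁄dX ℚ) f * S)) = 0 :=
    X_pow_dvd_iff.mp (hdvd.mul_left f) n (lt_add_one n)
  rw [mul_sub, map_sub, sub_eq_zero] at hz
  rw [hz]
  have hfS : f * S = 1 - (1 - f) ^ (n + 1) := by
    have hg := geom_sum_mul (1 - f) (n + 1)
    rw [hS]
    linear_combination -hg
  have : f * ((d⁄dX ℚ) f * S) = (d⁄dX ℚ) f * (f * S) := by ring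
  rw [this, hfS, mul_sub, mul_one, map_sub]
  have hz2 : coeff n ((d⁄dX ℚ) f * (1 - f) ^ (n + 1)) = 0 := by
    refine X_pow_dvd_iff.mp ?_ n (lt_add_one n)
    exact (pow_dvd_pow_of_dvd (X_dvd_one_sub hf) (n + 1)).mul_left _
  rw [hz2, sub_zero]

lemma logPS_mul {f g : PowerSeries ℚ} (hf : constantCoeff f = 1)
    (hg : constantCoeff g = 1) : logPS (f * g) = logPS f + logPS g := by
  have hfg : constantCoeff (f * g) = 1 := by rw [map_mul, hf, hg, mul_one]
  have hne : f * g ≠ 0 := fun h => by simp [h] at hfg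
  apply PowerSeries.derivative.ext
  · apply mul_left_cancel₀ hne
    rw [mul_derivative_logPS hfg]
    rw [Derivation.leibniz, map_add]
    simp only [smul_eq_mul]
    linear_combination (-g) * mul_derivative_logPS hf + (-f) * mul_derivative_logPS hg
  · rw [map_add, constantCoeff_logPS, constantCoeff_logPS, constantCoeff_logPS, add_zero]

lemma logPS_prod (s : Finset ℕ) (f : ℕ → PowerSeries ℚ)
    (h : ∀ i ∈ s, constantCoeff (f i) = 1) :
    logPS (∏ i ∈ s, f i) = ∑ i ∈ s, logPS (f i) := by
  induction s using Finset.cons_induction with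
  | empty =>
    simp only [Finset.prod_empty, Finset.sum_empty]
    ext n
    rw [coeff_logPS]
    refine Finset.sum_eq_zero fun k _ => ?_
    match k with
    | 0 => simp
    | (k+1) => simp [zero_pow, sub_self]
  | cons a s ha ih =>
    rw [Finset.prod_cons, Finset.sum_cons,
      logPS_mul (h a (Finset.mem_cons_self a s)) (by
        rw [map_prod]
        exact Finset.prod_eq_one fun i hi => h i (Finset.mem_cons_of_mem hi)),
      ih fun i hi => h i (Finset.mem_cons_of_mem hi)]

lemma coeff_logPS_congr {f g : PowerSeries ℚ} {n : ℕ}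
    (h : ∀ m ≤ n, coeff m f = coeff m g) :
    coeff n (logPS f) = coeff n (logPS g) := by
  rw [coeff_logPS, coeff_logPS]
  refine Finset.sum_congr rfl fun k _ => ?_
  have hdvd : (X : PowerSeries ℚ) ^ (n + 1) ∣ (f - 1) - (g - 1) := by
    refine X_pow_dvd_iff.mpr fun m hm => ?_
    simp only [sub_sub_sub_cancel_right, map_sub]
    rw [h m (by omega), sub_self]
  have h2 : coeff n ((f - 1) ^ k - (g - 1) ^ k) = 0 := by
    refine X_pow_dvd_iff.mp (hdvd.trans (sub_dvd_pow_sub_pow _ _ k)) n (lt_add_one n)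
  rw [map_sub, sub_eq_zero] at h2
  rw [h2]

lemma logPS_inv_geom (a : ℕ) (ha : 0 < a) :
    logPS ((1 - X ^ a : PowerSeries ℚ)⁻¹) =
      PowerSeries.mk fun n => if a ∣ n ∧ n ≠ 0 then (a : ℚ) / n else 0 := by
  set u : PowerSeries ℚ := 1 - X ^ a with hu
  set G : PowerSeries ℚ := PowerSeries.mk fun n => if a ∣ n ∧ n ≠ 0 then (a : ℚ) / n else 0
    with hG
  have hu1 : constantCoeff u = 1 := by
    rw [hu, map_sub, map_one, map_pow, constantCoeff_X, zero_pow ha.ne', sub_zero]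
  have huinv1 : constantCoeff u⁻¹ = 1 := by
    rw [PowerSeries.constantCoeff_inv, hu1, inv_one]
  have hune : u ≠ 0 := fun h => by simp [h] at hu1
  have huu : u * u⁻¹ = 1 := PowerSeries.mul_inv_cancel u (by rw [hu1]; exact one_ne_zero)
  have hDu : (d⁄dX ℚ) u = -(d⁄dX ℚ) (X ^ a : PowerSeries ℚ) := by
    rw [hu, map_sub]
    simp
  have h1 := mul_derivative_logPS huinv1
  have h4 : u * (d⁄dX ℚ) (logPS u⁻¹) = (d⁄dX ℚ) (X ^ a : PowerSeries ℚ) := by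
    have e1 : (d⁄dX ℚ) (logPS u⁻¹) = u * (d⁄dX ℚ) (u⁻¹) := by
      rw [← h1, ← mul_assoc, huu, one_mul]
    rw [e1, PowerSeries.derivative_inv', hDu]
    have e2 : u * (u * (-u⁻¹ ^ 2 * -(d⁄dX ℚ) (X ^ a : PowerSeries ℚ))) =
        (u * u⁻¹) ^ 2 * (d⁄dX ℚ) (X ^ a : PowerSeries ℚ) := by ring
    rw [e2, huu, one_pow, one_mul]
  have hc : ∀ m : ℕ, coeff m ((d⁄dX ℚ) G) = if a ∣ m + 1 then (a : ℚ) else 0 := by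
    intro m
    rw [coeff_derivative, hG, coeff_mk]
    by_cases h : a ∣ m + 1
    · rw [if_pos ⟨h, m.succ_ne_zero⟩, if_pos h]
      push_cast
      rw [div_mul_cancel₀]
      positivity
    · rw [if_neg (fun hcon => h hcon.1), if_neg h, zero_mul]
  have h5' : u * (d⁄dX ℚ) G = (d⁄dX ℚ) (X ^ a : PowerSeries ℚ) := by
    ext n
    rw [hu, sub_mul, one_mul, map_sub, PowerSeries.coeff_X_pow_mul', hc n, hc (n - a),
      coeff_derivative, coeff_X_pow]
    by_cases h1 : a ≤ n
    · have h2 : ¬ (n + 1 = a) := by omega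
      have h3 : a ∣ n + 1 ↔ a ∣ n - a + 1 := by
        constructor <;> intro hd
        · rw [show n - a + 1 = (n + 1) - a by omega]
          exact Nat.dvd_sub hd (dvd_refl a)
        · rw [show n + 1 = (n - a + 1) + a by omega]
          exact dvd_add hd (dvd_refl a)
      rw [if_pos h1, if_neg h2, zero_mul]
      by_cases h4 : a ∣ n + 1
      · rw [if_pos h4, if_pos (h3.mp h4), sub_self]
      · rw [if_neg h4, if_neg (fun hc => h4 (h3.mpr hc)), sub_self]
    · rw [if_neg h1, sub_zero]
      by_cases h3 : n + 1 = a
      · rw [if_pos (h3 ▸ dvd_refl a), if_pos h3, one_mul]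
        exact_mod_cast congrArg (Nat.cast : ℕ → ℚ) h3.symm
      · have h4 : ¬ a ∣ n + 1 := fun hd => by
          have := Nat.le_of_dvd n.succ_pos hd
          omega
        rw [if_neg h4, if_neg h3, zero_mul]
  apply PowerSeries.derivative.ext
  · exact mul_left_cancel₀ hune (h4.trans h5'.symm)
  · rw [constantCoeff_logPS, hG, ← coeff_zero_eq_constantCoeff_apply, coeff_mk]
    simp

lemma dvd_prod_sub_one (d : PowerSeries ℚ) (s : Finset ℕ) (f : ℕ → PowerSeries ℚ)
    (h : ∀ i ∈ s, d ∣ f i - 1) : d ∣ (∏ i ∈ s, f i) - 1 := by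
  induction s using Finset.cons_induction with
  | empty => simp
  | cons a s ha ih =>
    rw [Finset.prod_cons]
    have key : f a * (∏ i ∈ s, f i) - 1 =
        (f a - 1) * (∏ i ∈ s, f i) + ((∏ i ∈ s, f i) - 1) := by ring
    rw [key]
    exact dvd_add ((h a (Finset.mem_cons_self a s)).mul_right _)
      (ih fun i hi => h i (Finset.mem_cons_of_mem hi))

lemma X_pow_dvd_inv_sub_one (q : ℕ) (hq : 0 < q) :
    (X : PowerSeries ℚ) ^ q ∣ ((1 : PowerSeries ℚ) - X ^ q)⁻¹ - 1 := by
  have hu1 : constantCoeff ((1 : PowerSeries ℚ) - X ^ q) = 1 := by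
    rw [map_sub, map_one, map_pow, constantCoeff_X, zero_pow hq.ne', sub_zero]
  have huu : ((1 : PowerSeries ℚ) - X ^ q) * ((1 : PowerSeries ℚ) - X ^ q)⁻¹ = 1 :=
    PowerSeries.mul_inv_cancel _ (by rw [hu1]; exact one_ne_zero)
  exact ⟨((1 : PowerSeries ℚ) - X ^ q)⁻¹, by linear_combination huu⟩


/-- `log P_p(x) = (1/(p-1)) ∑_{n ≥ 1} (p n_p - 1) x^n / n` where `n_p` is the
p-part of `n`. -/
theorem stmt_13 (p : ℕ) (hp : p.Prime) :
    logPS (partitionProd p) = PowerSeries.mk fun n => if n = 0 then 0 else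
      (1 / ((p : ℚ) - 1)) * ((p : ℚ) * (p : ℚ) ^ (padicValNat p n) - 1) / n := by
  haveI : Fact p.Prime := ⟨hp⟩
  have hp1 : 1 < p := hp.one_lt
  have hconst : ∀ n : ℕ, constantCoeff (((1 : PowerSeries ℚ) - X ^ (p ^ n))⁻¹) = 1 := by
    intro n
    rw [PowerSeries.constantCoeff_inv, map_sub, map_one, map_pow, constantCoeff_X,
      zero_pow (pow_pos hp.pos n).ne', sub_zero, inv_one]
  ext N
  rw [coeff_mk]
  have hstep1 : coeff N (logPS (partitionProd p)) =
      coeff N (logPS (∏ n ∈ Finset.range (N + 1),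
        ((1 : PowerSeries ℚ) - X ^ (p ^ n))⁻¹)) := by
    apply coeff_logPS_congr
    intro m hm
    rw [partitionProd, prodPS, coeff_mk]
    rw [← Finset.prod_range_mul_prod_Ico _ (by omega : m + 1 ≤ N + 1)]
    have hR : (X : PowerSeries ℚ) ^ (m + 1) ∣
        (∏ n ∈ Finset.Ico (m + 1) (N + 1), ((1 : PowerSeries ℚ) - X ^ (p ^ n))⁻¹) - 1 := by
      apply dvd_prod_sub_one
      intro i hi
      have hi1 : m + 1 ≤ i := (Finset.mem_Ico.mp hi).1
      have h2 : m + 1 ≤ p ^ i := le_trans hi1 (Nat.lt_pow_self (n := i) hp1).le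
      exact (pow_dvd_pow (X : PowerSeries ℚ) h2).trans
        (X_pow_dvd_inv_sub_one (p ^ i) (pow_pos hp.pos i))
    set P := ∏ n ∈ Finset.range (m + 1), ((1 : PowerSeries ℚ) - X ^ (p ^ n))⁻¹ with hP
    set R := ∏ n ∈ Finset.Ico (m + 1) (N + 1), ((1 : PowerSeries ℚ) - X ^ (p ^ n))⁻¹ with hRdef
    have : P * R = P + P * (R - 1) := by ring
    rw [this, map_add]
    have hz : coeff m (P * (R - 1)) = 0 :=
      X_pow_dvd_iff.mp (hR.mul_left P) m (lt_add_one m)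
    rw [hz, add_zero]
  rw [hstep1, logPS_prod _ _ (fun i _ => hconst i), map_sum]
  have hterm : ∀ n ∈ Finset.range (N + 1),
      coeff N (logPS (((1 : PowerSeries ℚ) - X ^ (p ^ n))⁻¹)) =
        if p ^ n ∣ N ∧ N ≠ 0 then ((p : ℚ) ^ n) / N else 0 := by
    intro n _
    rw [logPS_inv_geom (p ^ n) (pow_pos hp.pos n), coeff_mk]
    by_cases h : p ^ n ∣ N ∧ N ≠ 0
    · rw [if_pos h, if_pos h]; push_cast; ring
    · rw [if_neg h, if_neg h]
  rw [Finset.sum_congr rfl hterm]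
  by_cases hN : N = 0
  · subst hN
    simp
  · rw [if_neg hN]
    set ν := padicValNat p N with hν
    have hνN : ν < N := lt_of_lt_of_le (Nat.lt_pow_self (n := ν) hp1)
      (Nat.le_of_dvd (Nat.pos_of_ne_zero hN) pow_padicValNat_dvd)
    have hsum : ∑ n ∈ Finset.range (N + 1),
        (if p ^ n ∣ N ∧ N ≠ 0 then ((p : ℚ) ^ n) / N else 0) =
        ∑ n ∈ Finset.range (ν + 1), ((p : ℚ) ^ n) / N := by
      rw [← Finset.sum_subset (Finset.range_subset_range.mpr (by omega : ν + 1 ≤ N + 1))]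
      · refine Finset.sum_congr rfl fun n hn => ?_
        rw [if_pos ⟨(padicValNat_dvd_iff_le hN).mpr (by
          simpa using Nat.lt_succ_iff.mp (Finset.mem_range.mp hn)), hN⟩]
      · intro n _ hn
        rw [if_neg]
        rintro ⟨hd, -⟩
        have := (padicValNat_dvd_iff_le hN).mp hd
        simp only [Finset.mem_range] at hn
        omega
    rw [hsum, ← Finset.sum_div, geom_sum_eq (by
      exact_mod_cast fun h => (by omega : p ≠ 1) (by exact_mod_cast h) : (p : ℚ) ≠ 1)]
    have hpne : (p : ℚ) - 1 ≠ 0 := by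
      have : (1 : ℚ) < p := by exact_mod_cast hp1
      linarith
    have hNne : (N : ℚ) ≠ 0 := Nat.cast_ne_zero.mpr hN
    rw [pow_succ]
    field_simp
end

section
/- For a prime p and r ≥ 2, the series G_r^p(x) = exp(-∑_{n ≥ 1} (pn)_p^{r-1} x^n/n) satisfies G_r^p(x) = (1-x)^{p^{r-1}} ∏_{n ≥ 1} (1 - x^{p^n})^{p^{n(r-2)}(p^{r-1} - 1)} as formal power series over ℚ. -/
open PowerSeries

/-- The series `G_r^p(x) = exp (-∑_{n ≥ 1} (p n)_p^(r-1) x^n / n)`,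
where `(p n)_p = p^(1 + ν_p n)`. -/
noncomputable def Gser (p r : ℕ) : PowerSeries ℚ :=
  expPS (serA fun n => -((p : ℚ) ^ ((1 + padicValNat p n) * (r - 1))))

namespace Stmt16Aux

/-- geometric series `∑_{m ∣ n} x^n`. -/
noncomputable def geomPS (m : ℕ) : ℚ⟦X⟧ := PowerSeries.mk fun n => if m ∣ n then 1 else 0

lemma geomPS_mul (m : ℕ) (hm : 0 < m) :
    ((1 : ℚ⟦X⟧) - X ^ m) * geomPS m = 1 := by
  ext n
  rw [sub_mul, one_mul, map_sub, coeff_X_pow_mul', geomPS, coeff_mk, coeff_one]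
  by_cases h0 : n = 0
  · subst h0
    simp [Nat.not_succ_le_zero, hm.ne', Nat.le_zero]
  · by_cases hd : m ∣ n
    · have hle : m ≤ n := Nat.le_of_dvd (Nat.pos_of_ne_zero h0) hd
      have h2 : m ∣ n - m := Nat.dvd_sub hd dvd_rfl
      simp [hd, hle, h2, coeff_mk, h0]
    · by_cases hle : m ≤ n
      · have h2 : ¬ m ∣ n - m := fun h => hd (by
          have := Nat.sub_add_cancel hle
          exact this ▸ Nat.dvd_add h dvd_rfl)
        simp [hd, hle, h2, coeff_mk, h0]
      · simp [hd, hle, coeff_mk, h0]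

lemma LD_mul {f g B C : ℚ⟦X⟧} (hf : X * d⁄dX ℚ f = B * f) (hg : X * d⁄dX ℚ g = C * g) :
    X * d⁄dX ℚ (f * g) = (B + C) * (f * g) := by
  rw [Derivation.leibniz, smul_eq_mul, smul_eq_mul]
  linear_combination f * hg + g * hf

lemma LD_prod {S : Finset ℕ} {F Bf : ℕ → ℚ⟦X⟧}
    (h : ∀ n ∈ S, X * d⁄dX ℚ (F n) = Bf n * F n) :
    X * d⁄dX ℚ (∏ n ∈ S, F n) = (∑ n ∈ S, Bf n) * ∏ n ∈ S, F n := by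
  induction S using Finset.cons_induction with
  | empty => simp
  | cons a S ha ih =>
    rw [Finset.prod_cons, Finset.sum_cons]
    exact LD_mul (h a (Finset.mem_cons_self a S))
      (ih fun n hn => h n (Finset.mem_cons_of_mem hn))

/-- log-derivative numerator of `(1 - X^m)^c`. -/
noncomputable def lfac (m c : ℕ) : ℚ⟦X⟧ :=
  -(PowerSeries.C ((c * m : ℕ) : ℚ)) * (X ^ m * geomPS m)

lemma LD_factor (m c : ℕ) (hm : 0 < m) :
    X * d⁄dX ℚ (((1 : ℚ⟦X⟧) - X ^ m) ^ c) = lfac m c * ((1 : ℚ⟦X⟧) - X ^ m) ^ c := by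
  have hXm : d⁄dX ℚ ((X : ℚ⟦X⟧) ^ m) = (m : ℚ⟦X⟧) * X ^ (m - 1) := by
    rw [Derivation.leibniz_pow, derivative_X, smul_eq_mul, mul_one, nsmul_eq_mul]
  have hu : d⁄dX ℚ ((1 : ℚ⟦X⟧) - X ^ m) = -((m : ℚ⟦X⟧) * X ^ (m - 1)) := by
    rw [map_sub, hXm]; simp
  rw [Derivation.leibniz_pow, hu]
  rcases Nat.eq_zero_or_pos c with rfl | hc
  · simp [lfac]
  · have hpow : ((1 : ℚ⟦X⟧) - X ^ m) ^ (c - 1) * (((1 : ℚ⟦X⟧) - X^m) * geomPS m)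
        = ((1:ℚ⟦X⟧) - X^m) ^ (c-1) := by rw [geomPS_mul m hm, mul_one]
    have hc' : c - 1 + 1 = c := Nat.succ_pred_eq_of_pos hc
    have hXX : (X : ℚ⟦X⟧) * X ^ (m - 1) = X ^ m := by
      rw [← pow_succ']
      congr 1
      omega
    rw [smul_eq_mul, nsmul_eq_mul, lfac]
    have hcast : ((c * m : ℕ) : ℚ⟦X⟧) = (c : ℚ⟦X⟧) * (m : ℚ⟦X⟧) := by push_cast; ring
    have hC : (PowerSeries.C ((c * m : ℕ) : ℚ)) = ((c * m : ℕ) : ℚ⟦X⟧) := by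
      simp only [PowerSeries.C_eq_algebraMap, map_natCast]
    rw [hC, hcast]
    calc X * ((c : ℚ⟦X⟧) * (((1:ℚ⟦X⟧) - X^m) ^ (c-1) * -((m:ℚ⟦X⟧) * X ^ (m-1))))
        = -((c:ℚ⟦X⟧) * (m:ℚ⟦X⟧)) * (X * X^(m-1)) * ((1:ℚ⟦X⟧) - X^m)^(c-1) := by ring
      _ = -((c:ℚ⟦X⟧) * (m:ℚ⟦X⟧)) * X^m * ((1:ℚ⟦X⟧) - X^m)^(c-1) := by rw [hXX]
      _ = -((c:ℚ⟦X⟧) * (m:ℚ⟦X⟧)) * X^m * (((1:ℚ⟦X⟧) - X^m)^(c-1) * (((1:ℚ⟦X⟧) - X^m) * geomPS m)) := by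
          rw [hpow]
      _ = -((c:ℚ⟦X⟧) * (m:ℚ⟦X⟧)) * (X^m * geomPS m) * (((1:ℚ⟦X⟧) - X^m)^(c-1) * ((1:ℚ⟦X⟧) - X^m)) := by
          ring
      _ = -((c:ℚ⟦X⟧) * (m:ℚ⟦X⟧)) * (X^m * geomPS m) * ((1:ℚ⟦X⟧) - X^m)^c := by
          rw [← pow_succ, hc']

lemma coeff_lfac (m c a : ℕ) (hm : 0 < m) :
    coeff a (lfac m c) = if m ∣ a ∧ a ≠ 0 then -((c : ℚ) * m) else 0 := by
  rw [lfac, neg_mul, map_neg, coeff_C_mul, coeff_X_pow_mul', geomPS]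
  by_cases h0 : a = 0
  · subst h0; simp [hm.ne']
  · by_cases hd : m ∣ a
    · have hle : m ≤ a := Nat.le_of_dvd (Nat.pos_of_ne_zero h0) hd
      have h2 : m ∣ a - m := Nat.dvd_sub hd dvd_rfl
      simp [hd, hle, h2, coeff_mk, h0]
    · by_cases hle : m ≤ a
      · have h2 : ¬ m ∣ a - m := fun h => hd (by
          have := Nat.sub_add_cancel hle
          exact this ▸ Nat.dvd_add h dvd_rfl)
        simp [hd, hle, h2, coeff_mk, h0]
      · simp [hd, hle, coeff_mk, h0]

lemma coeff_pow_eq_zero {f : ℚ⟦X⟧} (hf : constantCoeff f = 0) {n k : ℕ} (h : n < k) :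
    coeff n (f ^ k) = 0 := by
  obtain ⟨g, rfl⟩ := X_dvd_iff.mpr hf
  rw [mul_pow, coeff_X_pow_mul', if_neg (by omega)]

lemma LD_exp {f : ℚ⟦X⟧} (hf : constantCoeff f = 0) :
    d⁄dX ℚ (expPS f) = d⁄dX ℚ f * expPS f := by
  ext n
  rw [coeff_derivative]
  have key : ∀ i : ℕ, coeff (n+1) (f^(i+1)) * (n+1) = (i+1) * coeff n (f^i * d⁄dX ℚ f) := by
    intro i
    have h := congrArg (coeff n) (Derivation.leibniz_pow (d⁄dX ℚ) (a := f) (i+1))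
    rw [coeff_derivative, map_nsmul, smul_eq_mul, nsmul_eq_mul, Nat.add_sub_cancel] at h
    push_cast at h ⊢
    linarith [h]
  have lhs : coeff (n+1) (expPS f) * (n+1)
      = ∑ i ∈ Finset.range (n+1), coeff n (f^i * d⁄dX ℚ f) / (Nat.factorial i) := by
    rw [expPS, coeff_mk, Finset.sum_mul, Finset.sum_range_succ']
    have h0 : coeff (n+1) (f ^ 0) = 0 := by
      rw [pow_zero, coeff_one]; simp
    rw [h0]
    simp only [zero_div, zero_mul, add_zero]
    refine Finset.sum_congr rfl fun i _ => ?_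
    rw [div_mul_eq_mul_div, key i, Nat.factorial_succ]
    push_cast
    have hfac : (Nat.factorial i : ℚ) ≠ 0 := Nat.cast_ne_zero.mpr (Nat.factorial_ne_zero i)
    field_simp
  rw [lhs, coeff_mul]
  have step : ∀ q ∈ Finset.HasAntidiagonal.antidiagonal n,
      coeff q.1 (d⁄dX ℚ f) * coeff q.2 (expPS f)
        = ∑ k ∈ Finset.range (n+1), coeff q.1 (d⁄dX ℚ f) * (coeff q.2 (f^k) / k.factorial) := by
    intro q hq
    have hq2 : q.2 ≤ n := by
      rw [Finset.HasAntidiagonal.mem_antidiagonal] at hq; omega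
    rw [expPS, coeff_mk, Finset.mul_sum]
    refine (Finset.sum_subset (Finset.range_subset_range.mpr (by omega)) fun k _ hk => ?_)
    rw [Finset.mem_range, not_lt] at hk
    rw [coeff_pow_eq_zero hf (by omega), zero_div, mul_zero]
  rw [Finset.sum_congr rfl step, Finset.sum_comm]
  refine Finset.sum_congr rfl fun k _ => ?_
  rw [mul_comm (f^k), coeff_mul, Finset.sum_div]
  refine Finset.sum_congr rfl fun q _ => ?_
  rw [mul_div_assoc]

lemma LD_unique {f g A : ℚ⟦X⟧} (hA : constantCoeff A = 0)
    (hf : X * d⁄dX ℚ f = A * f) (hg : X * d⁄dX ℚ g = A * g)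
    (h0 : coeff 0 f = coeff 0 g) : f = g := by
  ext n
  induction n using Nat.strong_induction_on with
  | _ n ih =>
    match n with
    | 0 => exact h0
    | Nat.succ n =>
      have hfc := congrArg (coeff (n+1)) hf
      have hgc := congrArg (coeff (n+1)) hg
      rw [coeff_succ_X_mul, coeff_derivative, coeff_mul] at hfc hgc
      have hsum : ∑ q ∈ Finset.HasAntidiagonal.antidiagonal (n+1), coeff q.1 A * coeff q.2 f
          = ∑ q ∈ Finset.HasAntidiagonal.antidiagonal (n+1), coeff q.1 A * coeff q.2 g := by
        refine Finset.sum_congr rfl fun q hq => ?_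
        rw [Finset.HasAntidiagonal.mem_antidiagonal] at hq
        by_cases hq2 : q.2 ≤ n
        · rw [ih q.2 (by omega)]
        · have h1 : q.1 = 0 := by omega
          rw [h1]
          have h2 : coeff 0 A = 0 := by rwa [coeff_zero_eq_constantCoeff]
          rw [h2, zero_mul, zero_mul]
      have := hfc.trans (hsum.trans hgc.symm)
      exact mul_right_cancel₀ (by positivity) this

section Main

variable (p r : ℕ)

/-- exponent of the `n`-th factor. -/
def cfun (n : ℕ) : ℕ := p ^ (n * (r - 2)) * (p ^ (r - 1) - 1)

/-- the `n`-th factor of the infinite product. -/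
noncomputable def fac (n : ℕ) : ℚ⟦X⟧ :=
  if n = 0 then 1 else ((1 : ℚ⟦X⟧) - X ^ (p ^ n)) ^ (cfun p r n)

/-- the log-derivative numerator of the `n`-th factor. -/
noncomputable def Bfac (n : ℕ) : ℚ⟦X⟧ :=
  if n = 0 then 0 else lfac (p ^ n) (cfun p r n)

/-- the common log-derivative numerator. -/
noncomputable def Aser : ℚ⟦X⟧ :=
  PowerSeries.mk fun n => if n = 0 then 0 else -((p : ℚ) ^ ((1 + padicValNat p n) * (r - 1)))

variable {p}

lemma fac_dvd (hp : p.Prime) {j n : ℕ} (hn : j < n) :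
    (X : ℚ⟦X⟧) ^ (j + 1) ∣ fac p r n - 1 := by
  have hn0 : n ≠ 0 := by omega
  rw [fac, if_neg hn0]
  have h1 : (X : ℚ⟦X⟧) ^ (p ^ n) ∣ ((1 : ℚ⟦X⟧) - X ^ (p ^ n)) ^ (cfun p r n) - 1 := by
    have h2 : ((1 : ℚ⟦X⟧) - X ^ (p ^ n)) - 1 ∣
        ((1 : ℚ⟦X⟧) - X ^ (p ^ n)) ^ (cfun p r n) - 1 ^ (cfun p r n) :=
      sub_dvd_pow_sub_pow _ _ _
    rw [one_pow] at h2
    refine dvd_trans ?_ h2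
    exact ⟨-1, by ring⟩
  refine dvd_trans (pow_dvd_pow X ?_) h1
  have h3 : n < 2 ^ n := Nat.lt_two_pow_self
  have h4 : 2 ^ n ≤ p ^ n := Nat.pow_le_pow_left hp.two_le n
  omega

lemma coeff_mul_of_dvd_sub_one {u P : ℚ⟦X⟧} {j : ℕ} (h : (X : ℚ⟦X⟧) ^ (j + 1) ∣ u - 1) :
    coeff j (P * u) = coeff j P := by
  obtain ⟨w, hw⟩ := h
  have hPu : P * u = P + X ^ (j + 1) * (w * P) := by linear_combination P * hw
  rw [hPu, map_add, coeff_X_pow_mul', if_neg (by omega), add_zero]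

lemma coeff_prod_stable (hp : p.Prime) (j : ℕ) :
    ∀ M, j ≤ M → coeff j (∏ n ∈ Finset.range (M + 1), fac p r n)
      = coeff j (∏ n ∈ Finset.range (j + 1), fac p r n) := by
  intro M
  induction M with
  | zero => intro h; have : j = 0 := by omega
            subst this; rfl
  | succ M ih =>
    intro hjM
    rcases Nat.lt_or_ge j (M + 1) with h | h
    · rw [Finset.prod_range_succ,
        coeff_mul_of_dvd_sub_one (fac_dvd r hp (by omega)), ih (by omega)]
    · have : j = M + 1 := by omega
      subst this; rfl

lemma coeff_prodPS_eq (hp : p.Prime) {j M : ℕ} (hjM : j ≤ M) :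
    coeff j (prodPS (fac p r)) = coeff j (∏ n ∈ Finset.range (M + 1), fac p r n) := by
  rw [prodPS, coeff_mk, coeff_prod_stable r hp j M hjM]


variable (p)

/-- partial product. -/
noncomputable def GM (M : ℕ) : ℚ⟦X⟧ :=
  ((1 : ℚ⟦X⟧) - X) ^ (p ^ (r - 1)) * ∏ n ∈ Finset.range (M + 1), fac p r n

/-- partial log-derivative numerator. -/
noncomputable def BM (M : ℕ) : ℚ⟦X⟧ :=
  lfac 1 (p ^ (r - 1)) + ∑ n ∈ Finset.range (M + 1), Bfac p r n

variable {p}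

lemma LD_GM (hp : p.Prime) (M : ℕ) :
    X * d⁄dX ℚ (GM p r M) = BM p r M * GM p r M := by
  apply LD_mul
  · have := LD_factor 1 (p ^ (r - 1)) one_pos
    simpa [pow_one] using this
  · apply LD_prod
    intro n _
    rcases eq_or_ne n 0 with rfl | hn
    · simp [fac, Bfac]
    · rw [fac, if_neg hn, Bfac, if_neg hn]
      exact LD_factor _ _ (pow_pos hp.pos n)

lemma cfun_cast (hp : 0 < p) (hr : 2 ≤ r) (n : ℕ) :
    ((cfun p r n : ℚ)) * ((p : ℚ)) ^ n = (p : ℚ) ^ ((n + 1) * (r - 1)) - (p : ℚ) ^ (n * (r - 1)) := by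
  have hone : 1 ≤ p ^ (r - 1) := Nat.one_le_pow _ _ hp
  rw [cfun, Nat.cast_mul, Nat.cast_sub hone, Nat.cast_pow, Nat.cast_pow, Nat.cast_one]
  have e1 : (n + 1) * (r - 1) = n * (r - 2) + n + (r - 1) := by
    have h : r - 1 = (r - 2) + 1 := by omega
    rw [h]; ring
  have e2 : n * (r - 1) = n * (r - 2) + n := by
    have h : r - 1 = (r - 2) + 1 := by omega
    rw [h, Nat.mul_succ]
  rw [e1, e2, pow_add, pow_add]
  ring

lemma coeff_BM (hp : p.Prime) (hr : 2 ≤ r) {a M : ℕ} (haM : a ≤ M) :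
    coeff a (BM p r M) = coeff a (Aser p r) := by
  haveI : Fact p.Prime := ⟨hp⟩
  rw [BM, map_add, map_sum, Aser, coeff_mk]
  rcases eq_or_ne a 0 with rfl | ha
  · rw [coeff_lfac _ _ _ one_pos, if_neg (by simp), if_pos rfl]
    have hz : ∀ n ∈ Finset.range (M + 1), coeff 0 (Bfac p r n) = 0 := by
      intro n _
      rcases eq_or_ne n 0 with rfl | hn
      · simp [Bfac]
      · rw [Bfac, if_neg hn, coeff_lfac _ _ _ (pow_pos hp.pos n), if_neg (by simp)]
    rw [Finset.sum_congr rfl hz]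
    simp
  · rw [if_neg ha]
    set v := padicValNat p a with hv
    have hva : p ^ v ∣ a := pow_padicValNat_dvd
    have hvM : v ≤ M := by
      have h1 : v < 2 ^ v := Nat.lt_two_pow_self
      have h2 : 2 ^ v ≤ p ^ v := Nat.pow_le_pow_left hp.two_le v
      have h3 : p ^ v ≤ a := Nat.le_of_dvd (Nat.pos_of_ne_zero ha) hva
      omega
    rw [coeff_lfac _ _ _ one_pos, if_pos ⟨one_dvd a, ha⟩]
    set F : ℕ → ℚ := fun j => (p : ℚ) ^ (j * (r - 1)) with hF
    have hterm : ∀ n, coeff a (Bfac p r n)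
        = if n ≠ 0 ∧ n ≤ v then -(F (n + 1) - F n) else 0 := by
      intro n
      rcases eq_or_ne n 0 with rfl | hn
      · simp [Bfac]
      · rw [Bfac, if_neg hn, coeff_lfac _ _ _ (pow_pos hp.pos n)]
        have hdvd : (p ^ n ∣ a) ↔ n ≤ v := padicValNat_dvd_iff_le ha
        by_cases hnv : n ≤ v
        · rw [if_pos ⟨hdvd.mpr hnv, ha⟩, if_pos ⟨hn, hnv⟩, hF]
          rw [← cfun_cast r hp.pos hr n]
          push_cast
          ring
        · rw [if_neg (fun hc => hnv (hdvd.mp hc.1)), if_neg (fun hc => hnv hc.2)]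
    rw [Finset.sum_congr rfl (fun n _ => hterm n)]
    have hsub : ∑ n ∈ Finset.range (M + 1), (if n ≠ 0 ∧ n ≤ v then -(F (n + 1) - F n) else 0)
        = ∑ n ∈ Finset.range (v + 1), (if n ≠ 0 ∧ n ≤ v then -(F (n + 1) - F n) else 0) := by
      refine (Finset.sum_subset (Finset.range_subset_range.mpr (by omega)) fun n _ hn => ?_).symm
      rw [Finset.mem_range, not_lt] at hn
      exact if_neg (fun hc => by omega)
    rw [hsub, Finset.sum_range_succ']
    have h00 : (if (0 : ℕ) ≠ 0 ∧ (0 : ℕ) ≤ v then -(F (0 + 1) - F 0) else 0) = 0 :=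
      if_neg (by simp)
    rw [h00, add_zero]
    have hin : ∀ i ∈ Finset.range v, (if i + 1 ≠ 0 ∧ i + 1 ≤ v then -(F (i + 1 + 1) - F (i + 1)) else 0)
        = -(F (i + 1 + 1) - F (i + 1)) := by
      intro i hi
      rw [Finset.mem_range] at hi
      exact if_pos ⟨by omega, by omega⟩
    rw [Finset.sum_congr rfl hin]
    have htel : ∑ i ∈ Finset.range v, (F (i + 1 + 1) - F (i + 1)) = F (v + 1) - F 1 :=
      Finset.sum_range_sub (fun i => F (i + 1)) v
    have hneg : ∑ i ∈ Finset.range v, -(F (i + 1 + 1) - F (i + 1))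
        = -∑ i ∈ Finset.range v, (F (i + 1 + 1) - F (i + 1)) := by
      rw [← Finset.sum_neg_distrib]
    rw [hneg, htel, hF]
    have hcast : ((p ^ (r - 1) : ℕ) : ℚ) = (p : ℚ) ^ (1 * (r - 1)) := by push_cast; ring
    rw [hcast]
    have hco : (1 + v) * (r - 1) = (v + 1) * (r - 1) := by ring
    rw [hco]
    ring

end Main

end Stmt16Aux

/-- `G_r^p(x) = (1-x)^(p^(r-1)) ∏_{n ≥ 1} (1 - x^(p^n))^(p^(n(r-2)) (p^(r-1) - 1))`. -/
theorem stmt_16 (p : ℕ) (hp : p.Prime) (r : ℕ) (hr : 2 ≤ r) :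
    Gser p r = ((1 : PowerSeries ℚ) - PowerSeries.X) ^ (p ^ (r - 1)) *
      prodPS (fun n => if n = 0 then 1 else
        ((1 : PowerSeries ℚ) - PowerSeries.X ^ (p ^ n)) ^
          (p ^ (n * (r - 2)) * (p ^ (r - 1) - 1))) := by
  classical
  open Stmt16Aux in
  have hfeq : (fun n => if n = 0 then (1 : PowerSeries ℚ) else
      ((1 : PowerSeries ℚ) - PowerSeries.X ^ (p ^ n)) ^
        (p ^ (n * (r - 2)) * (p ^ (r - 1) - 1))) = Stmt16Aux.fac p r := rfl
  rw [hfeq]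
  set G : ℚ⟦X⟧ := ((1 : ℚ⟦X⟧) - X) ^ (p ^ (r - 1)) * prodPS (Stmt16Aux.fac p r) with hG
  set b : ℕ → ℚ := fun n => -((p : ℚ) ^ ((1 + padicValNat p n) * (r - 1))) with hb
  have hb0 : constantCoeff (serA b) = 0 := by
    rw [← coeff_zero_eq_constantCoeff, serA, coeff_mk]; simp
  have hA0 : constantCoeff (Stmt16Aux.Aser p r) = 0 := by
    rw [← coeff_zero_eq_constantCoeff, Stmt16Aux.Aser, coeff_mk]; simp
  have hXD : X * d⁄dX ℚ (serA b) = Stmt16Aux.Aser p r := by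
    ext k
    cases k with
    | zero =>
      have h1 : coeff 0 (X * d⁄dX ℚ (serA b)) = 0 := by
        rw [coeff_zero_eq_constantCoeff, map_mul, constantCoeff_X, zero_mul]
      rw [h1, Stmt16Aux.Aser, coeff_mk]; simp
    | succ k =>
      rw [coeff_succ_X_mul, coeff_derivative, serA, coeff_mk, Stmt16Aux.Aser, coeff_mk,
        if_neg k.succ_ne_zero, if_neg k.succ_ne_zero]
      have hk : ((k + 1 : ℕ) : ℚ) ≠ 0 := by positivity
      field_simp
      simp only [hb]; push_cast; ring
  have hf : X * d⁄dX ℚ (Gser p r) = Stmt16Aux.Aser p r * Gser p r := by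
    show X * d⁄dX ℚ (expPS (serA b)) = Stmt16Aux.Aser p r * expPS (serA b)
    rw [Stmt16Aux.LD_exp hb0, ← mul_assoc, hXD]
  have hGb : ∀ M, ∀ b' ≤ M, coeff b' G = coeff b' (Stmt16Aux.GM p r M) := by
    intro M b' hb'
    rw [hG, Stmt16Aux.GM, coeff_mul, coeff_mul]
    refine Finset.sum_congr rfl fun q hq => ?_
    rw [Finset.HasAntidiagonal.mem_antidiagonal] at hq
    rw [Stmt16Aux.coeff_prodPS_eq r hp (show q.2 ≤ M by omega)]
  have hg : X * d⁄dX ℚ G = Stmt16Aux.Aser p r * G := by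
    ext k
    cases k with
    | zero =>
      have h1 : coeff 0 (X * d⁄dX ℚ G) = 0 := by
        rw [coeff_zero_eq_constantCoeff, map_mul, constantCoeff_X, zero_mul]
      have h2 : coeff 0 (Stmt16Aux.Aser p r * G) = 0 := by
        rw [coeff_zero_eq_constantCoeff, map_mul, hA0, zero_mul]
      rw [h1, h2]
    | succ j =>
      have hM : j + 1 ≤ j + 1 := le_refl _
      have e1 : coeff (j + 1) (X * d⁄dX ℚ G) = coeff (j + 1) G * (j + 1) := by
        rw [coeff_succ_X_mul, coeff_derivative]
      have e2 : coeff (j + 1) (X * d⁄dX ℚ (Stmt16Aux.GM p r (j + 1)))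
          = coeff (j + 1) (Stmt16Aux.GM p r (j + 1)) * (j + 1) := by
        rw [coeff_succ_X_mul, coeff_derivative]
      rw [e1, hGb (j + 1) (j + 1) hM, ← e2, Stmt16Aux.LD_GM r hp (j + 1), coeff_mul, coeff_mul]
      refine Finset.sum_congr rfl fun q hq => ?_
      rw [Finset.HasAntidiagonal.mem_antidiagonal] at hq
      rw [Stmt16Aux.coeff_BM r hp hr (show q.1 ≤ j + 1 by omega),
        ← hGb (j + 1) q.2 (by omega)]
  have h0 : coeff 0 (Gser p r) = coeff 0 G := by
    have hL : coeff 0 (Gser p r) = 1 := by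
      show coeff 0 (expPS (serA b)) = 1
      rw [expPS, coeff_mk, Finset.sum_range_one, pow_zero, coeff_one]
      simp
    have hR : coeff 0 G = 1 := by
      rw [hG, coeff_zero_eq_constantCoeff, map_mul, map_pow, map_sub, map_one, constantCoeff_X,
        sub_zero, one_pow, one_mul, ← coeff_zero_eq_constantCoeff, prodPS, coeff_mk,
        Finset.prod_range_one]
      show coeff 0 (Stmt16Aux.fac p r 0) = 1
      rw [Stmt16Aux.fac, if_pos rfl, coeff_one]
      simp
    rw [hL, hR]
  exact Stmt16Aux.LD_unique hA0 hf hg h0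
end

section
/- Define F_r^p(x) = exp(-∑_{n ≥ 1} (q^n - 1)_p^{r-1} x^n/n) over ℚ, where q is a prime power prime to p and m_p denotes the p-part of m. If the coefficients (q^n-1)_p satisfy the recursion arising from F_{r+1}^p = ∏_d F_r^p(x^d)^{A^p(d)(q)}, then when r = 2, A^p(n)(q) = (1/n) ∑_{d | n} μ(n/d) (q^d - 1)_p, where A^p(n)(q) is the number of monic irreducible polynomials of degree n and p-power order in F_q[t]. Equivalently, (q^n - 1)_p = ∑_{d | n} d · A^p(d)(q). -/
open Polynomial

set_option linter.unusedSectionVars false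
set_option linter.unusedVariables false
set_option linter.deprecated false

private lemma nat_dvd_of_pow_sub_one_dvd {q : ℕ} (hq : 2 ≤ q) {d : ℕ} (hd : 0 < d) :
    ∀ n : ℕ, q ^ d - 1 ∣ q ^ n - 1 → d ∣ n := by
  intro n
  induction n using Nat.strong_induction_on with
  | _ n ih =>
    intro h
    rcases lt_or_ge n d with hn | hn
    · rcases Nat.eq_zero_or_pos n with rfl | hn0
      · exact dvd_zero d
      · exfalso
        have h1 : 2 ≤ q ^ n := le_trans hq (Nat.le_self_pow hn0.ne' q)
        have hlt : q ^ n < q ^ d := Nat.pow_lt_pow_right (by omega) hn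
        have := Nat.le_of_dvd (by omega) h
        omega
    · have ha : 1 ≤ q ^ (n - d) := Nat.one_le_pow _ _ (by omega)
      have hb : 1 ≤ q ^ d := Nat.one_le_pow _ _ (by omega)
      have h3 : q ^ (n - d) * q ^ d = q ^ n := by rw [← pow_add]; congr 1; omega
      obtain ⟨a', ha'⟩ : ∃ a', q ^ (n - d) = a' + 1 := ⟨q ^ (n - d) - 1, by omega⟩
      obtain ⟨b', hb'⟩ : ∃ b', q ^ d = b' + 1 := ⟨q ^ d - 1, by omega⟩
      have hqn : q ^ n = (a' + 1) * b' + a' + 1 := by rw [← h3, ha', hb']; ring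
      have key : q ^ n - 1 = (a' + 1) * (q ^ d - 1) + (q ^ (n - d) - 1) := by
        rw [hb', ha']; simp only [Nat.add_sub_cancel]; omega
      rw [key] at h
      have hdvd2 : q ^ d - 1 ∣ q ^ (n - d) - 1 :=
        (Nat.dvd_add_right ⟨a' + 1, mul_comm _ _⟩).mp h
      rcases Nat.eq_zero_or_pos (n - d) with h0 | hpos
      · have : n = d := by omega
        exact this ▸ dvd_rfl
      · have := ih (n - d) (by omega) hdvd2
        have : d ∣ (n - d) + d := Nat.dvd_add this dvd_rfl
        rwa [Nat.sub_add_cancel hn] at this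


section
variable {Fq : Type} [Field Fq] [Fintype Fq]

private lemma dvd_X_pow_sub_one_iff {f : Fq[X]} (hm : f.Monic) (hi : Irreducible f) (e : ℕ) :
    f ∣ X ^ e - 1 ↔ (AdjoinRoot.root f) ^ e = 1 := by
  haveI := Fact.mk hi
  have hmin : minpoly Fq (AdjoinRoot.root f) = f := by
    rw [AdjoinRoot.minpoly_root hi.ne_zero, hm.leadingCoeff, inv_one, map_one, mul_one]
  have h := minpoly.dvd_iff (A := Fq) (x := AdjoinRoot.root f) (p := X ^ e - 1)
  rw [hmin] at h
  rw [h]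
  simp [sub_eq_zero]

private lemma sInf_eq_orderOf {f : Fq[X]} (hm : f.Monic) (hi : Irreducible f)
    (hx : (AdjoinRoot.root f) ≠ 0) :
    sInf {e : ℕ | 0 < e ∧ f ∣ X ^ e - 1} = orderOf (AdjoinRoot.root f) := by
  haveI := Fact.mk hi
  haveI : Module.Finite Fq (AdjoinRoot f) := (AdjoinRoot.powerBasis hi.ne_zero).finite
  haveI : Finite (AdjoinRoot f) := Module.finite_of_finite Fq
  letI : Fintype (AdjoinRoot f) := Fintype.ofFinite _
  set x := AdjoinRoot.root f with hxdef
  have hcard : 0 < Fintype.card (AdjoinRoot f) - 1 := by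
    have : 2 ≤ Fintype.card (AdjoinRoot f) := Fintype.one_lt_card
    omega
  have hpow : x ^ (Fintype.card (AdjoinRoot f) - 1) = 1 :=
    FiniteField.pow_card_sub_one_eq_one x hx
  have hfin : IsOfFinOrder x := isOfFinOrder_iff_pow_eq_one.mpr ⟨_, hcard, hpow⟩
  have h1 : orderOf x ∈ {e : ℕ | 0 < e ∧ f ∣ X ^ e - 1} :=
    ⟨hfin.orderOf_pos, (dvd_X_pow_sub_one_iff hm hi _).mpr (pow_orderOf_eq_one x)⟩
  refine le_antisymm (Nat.sInf_le h1) ?_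
  obtain ⟨hpos, hdvd⟩ := Nat.sInf_mem (⟨_, h1⟩ : {e : ℕ | 0 < e ∧ f ∣ X ^ e - 1}.Nonempty)
  exact Nat.le_of_dvd hpos (orderOf_dvd_iff_pow_eq_one.mpr ((dvd_X_pow_sub_one_iff hm hi _).mp hdvd))

private lemma card_adjoinRoot {f : Fq[X]} (hi : Irreducible f)
    [Fintype (AdjoinRoot f)] :
    Fintype.card (AdjoinRoot f) = Fintype.card Fq ^ f.natDegree := by
  haveI := Fact.mk hi
  haveI : Module.Finite Fq (AdjoinRoot f) := (AdjoinRoot.powerBasis hi.ne_zero).finite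
  rw [Module.card_eq_pow_finrank (K := Fq)]
  congr 1
  rw [(AdjoinRoot.powerBasis hi.ne_zero).finrank, AdjoinRoot.powerBasis_dim]

private lemma forall_pow_card_pow {f : Fq[X]} (hi : Irreducible f) (n : ℕ)
    (hroot : (AdjoinRoot.root f) ^ Fintype.card Fq ^ n = AdjoinRoot.root f) :
    ∀ y : AdjoinRoot f, y ^ Fintype.card Fq ^ n = y := by
  haveI := Fact.mk hi
  set p' := ringChar Fq with hp'def
  haveI : CharP Fq p' := ringChar.charP Fq
  have hp' : p'.Prime := CharP.char_is_prime Fq p'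
  haveI := Fact.mk hp'
  obtain ⟨k, -, hk⟩ := FiniteField.card Fq p'
  haveI : CharP (AdjoinRoot f) p' :=
    charP_of_injective_algebraMap (algebraMap Fq (AdjoinRoot f)).injective p'
  have hqn : Fintype.card Fq ^ n = p' ^ ((k : ℕ) * n) := by rw [hk, ← pow_mul]
  let S : Subalgebra Fq (AdjoinRoot f) :=
  { carrier := {y | y ^ Fintype.card Fq ^ n = y}
    mul_mem' := by
      intro a b ha hb
      simp only [Set.mem_setOf_eq, mul_pow] at *
      rw [ha, hb]
    one_mem' := by simp
    add_mem' := by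
      intro a b ha hb
      simp only [Set.mem_setOf_eq, hqn] at *
      rw [add_pow_char_pow, ha, hb]
    zero_mem' := by
      simp only [Set.mem_setOf_eq]
      exact zero_pow (by positivity)
    algebraMap_mem' := fun c => by
      simp only [Set.mem_setOf_eq, ← map_pow, FiniteField.pow_card_pow] }
  have hle : Algebra.adjoin Fq {AdjoinRoot.root f} ≤ S :=
    Algebra.adjoin_le (by rintro y hy; rw [Set.mem_singleton_iff] at hy; exact hy ▸ hroot)
  rw [AdjoinRoot.adjoinRoot_eq_top] at hle
  intro y
  exact hle (Algebra.mem_top : y ∈ (⊤ : Subalgebra Fq (AdjoinRoot f)))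

end

section
variable {Fq : Type} [Field Fq] [Fintype Fq]

private lemma factor_char {p : ℕ} (hp : p.Prime) (hq : ¬ p ∣ Fintype.card Fq) {n : ℕ}
    (hn : 1 ≤ n) (f : Fq[X]) :
    (f.Monic ∧ Irreducible f ∧ f.natDegree ∣ n ∧
        ∃ m : ℕ, sInf {e : ℕ | 0 < e ∧ f ∣ X ^ e - 1} = p ^ m)
    ↔ (f.Monic ∧ Irreducible f ∧
        f ∣ X ^ (p ^ padicValNat p (Fintype.card Fq ^ n - 1)) - 1) := by
  set q := Fintype.card Fq with hqdef
  have hq2 : 2 ≤ q := Fintype.one_lt_card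
  have hqn2 : 2 ≤ q ^ n := le_trans hq2 (Nat.le_self_pow (by omega) q)
  set v := padicValNat p (q ^ n - 1) with hv
  have hPdvd : p ^ v ∣ q ^ n - 1 := by
    have := Nat.ordProj_dvd (q ^ n - 1) p
    rwa [Nat.factorization_def _ hp] at this
  constructor
  · rintro ⟨hm, hi, hdn, m, hord⟩
    refine ⟨hm, hi, ?_⟩
    haveI := Fact.mk hi
    haveI : Module.Finite Fq (AdjoinRoot f) := (AdjoinRoot.powerBasis hi.ne_zero).finite
    haveI : Finite (AdjoinRoot f) := Module.finite_of_finite Fq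
    letI : Fintype (AdjoinRoot f) := Fintype.ofFinite _
    set x := AdjoinRoot.root f with hxdef
    have hne : {e : ℕ | 0 < e ∧ f ∣ X ^ e - 1}.Nonempty := by
      by_contra hcon
      rw [Set.not_nonempty_iff_eq_empty] at hcon
      rw [hcon, Nat.sInf_empty] at hord
      exact (pow_pos hp.pos m).ne' hord.symm
    obtain ⟨hpos, hdvd⟩ := Nat.sInf_mem hne
    rw [hord] at hdvd
    have hx1 : x ^ p ^ m = 1 := (dvd_X_pow_sub_one_iff hm hi _).mp hdvd
    have hx0 : x ≠ 0 := by
      intro h0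
      rw [h0, zero_pow (pow_pos hp.pos m).ne'] at hx1
      exact zero_ne_one hx1
    have horder : orderOf x = p ^ m := by rw [← sInf_eq_orderOf hm hi hx0, hord]
    -- orderOf x divides q^d - 1
    have hxu : IsUnit x := hx0.isUnit
    obtain ⟨u, hu⟩ := hxu
    have h1 : orderOf u ∣ Fintype.card (AdjoinRoot f)ˣ := orderOf_dvd_card
    rw [← hu, orderOf_units] at horder
    rw [Fintype.card_units, card_adjoinRoot hi] at h1
    obtain ⟨s, hs⟩ := hdn
    have h2 : q ^ f.natDegree - 1 ∣ q ^ n - 1 := by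
      rw [hs]; exact Nat.pow_sub_one_dvd_pow_sub_one q (dvd_mul_right f.natDegree s)
    have h3 : p ^ m ∣ q ^ n - 1 := horder ▸ dvd_trans h1 h2
    have hmle : m ≤ v := by
      rw [hv, ← Nat.factorization_def _ hp]
      exact (Nat.Prime.pow_dvd_iff_le_factorization hp (by omega)).mp h3
    obtain ⟨c, hc⟩ := pow_dvd_pow p hmle
    have hXdvd : (X ^ p ^ m - 1 : Fq[X]) ∣ X ^ p ^ v - 1 := by
      have := sub_dvd_pow_sub_pow (X ^ p ^ m : Fq[X]) 1 c
      rwa [one_pow, ← pow_mul, ← hc] at this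
    exact dvd_trans hdvd hXdvd
  · rintro ⟨hm, hi, hdvd⟩
    haveI := Fact.mk hi
    haveI : Module.Finite Fq (AdjoinRoot f) := (AdjoinRoot.powerBasis hi.ne_zero).finite
    haveI : Finite (AdjoinRoot f) := Module.finite_of_finite Fq
    letI : Fintype (AdjoinRoot f) := Fintype.ofFinite _
    set x := AdjoinRoot.root f with hxdef
    have hx1 : x ^ p ^ v = 1 := (dvd_X_pow_sub_one_iff hm hi _).mp hdvd
    have hx0 : x ≠ 0 := by
      intro h0
      rw [h0, zero_pow (pow_pos hp.pos v).ne'] at hx1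
      exact zero_ne_one hx1
    have horddvd : orderOf x ∣ p ^ v := orderOf_dvd_iff_pow_eq_one.mpr hx1
    refine ⟨hm, hi, ?_, ?_⟩
    · -- natDegree ∣ n
      have hxqn : x ^ q ^ n = x := by
        have h1 : orderOf x ∣ q ^ n - 1 := dvd_trans horddvd hPdvd
        have h2 : x ^ (q ^ n - 1) = 1 := orderOf_dvd_iff_pow_eq_one.mp h1
        calc x ^ q ^ n = x ^ (q ^ n - 1) * x := by
              rw [← pow_succ]; congr 1; omega
          _ = x := by rw [h2, one_mul]
      have hall := forall_pow_card_pow hi n hxqn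
      obtain ⟨g, hg⟩ := IsCyclic.exists_generator (α := (AdjoinRoot f)ˣ)
      have hordg : orderOf g = q ^ f.natDegree - 1 := by
        rw [orderOf_eq_card_of_forall_mem_zpowers hg, Nat.card_eq_fintype_card, Fintype.card_units, card_adjoinRoot hi]
      have hgpow : g ^ q ^ n = g := Units.ext (by
        rw [Units.val_pow_eq_pow_val]; exact hall g)
      have hgpow1 : g ^ (q ^ n - 1) = 1 := by
        have h := hgpow
        rw [show q ^ n = (q ^ n - 1) + 1 by omega, pow_succ] at h
        have := mul_right_cancel (b := g) (a := g ^ (q ^ n - 1)) (c := 1) (by rwa [one_mul])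
        exact this
      have h4 : q ^ f.natDegree - 1 ∣ q ^ n - 1 := by
        rw [← hordg]; exact orderOf_dvd_iff_pow_eq_one.mpr hgpow1
      exact nat_dvd_of_pow_sub_one_dvd hq2 hi.natDegree_pos _ h4
    · obtain ⟨m, -, hmm⟩ := (Nat.dvd_prime_pow hp).mp horddvd
      exact ⟨m, by rw [sInf_eq_orderOf hm hi hx0, hmm]⟩

end

/-- The number of monic irreducible polynomials of degree `d` over the finite
field `Fq` whose order (the least `e > 0` with `f ∣ X^e - 1`) is a power of `p`. -/
noncomputable def numIrredPPowerOrder (Fq : Type) [Field Fq] [Fintype Fq]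
    (p d : ℕ) : ℕ :=
  Nat.card {f : Polynomial Fq // f.Monic ∧ Irreducible f ∧ f.natDegree = d ∧
    ∃ m : ℕ, sInf {e : ℕ | 0 < e ∧ f ∣ Polynomial.X ^ e - 1} = p ^ m}

/-- `(q^n - 1)_p = ∑_{d ∣ n} d · A^p(d)(q)` where `A^p(d)(q)` is the number of
monic irreducible polynomials of degree `d` and `p`-power order in `F_q[t]`. -/
theorem stmt_18 (p : ℕ) (hp : p.Prime) (Fq : Type) [Field Fq] [Fintype Fq]
    (hq : ¬ p ∣ Fintype.card Fq) :
    ∀ n : ℕ, 1 ≤ n →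
      p ^ (padicValNat p (Fintype.card Fq ^ n - 1)) =
        ∑ d ∈ n.divisors, d * numIrredPPowerOrder Fq p d := by
  intro n hn
  classical
  set q := Fintype.card Fq with hqdef
  have hq2 : 2 ≤ q := Fintype.one_lt_card
  have hqn2 : 2 ≤ q ^ n := le_trans hq2 (Nat.le_self_pow (by omega) q)
  set v := padicValNat p (q ^ n - 1) with hv
  set P := p ^ v with hPdef
  have hP0 : 0 < P := pow_pos hp.pos v
  -- (P : Fq) ≠ 0
  have hp' : (ringChar Fq).Prime := CharP.char_is_prime Fq (ringChar Fq)
  have hPne : (P : Fq) ≠ 0 := by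
    rw [Ne, CharP.cast_eq_zero_iff Fq (ringChar Fq)]
    intro hdvd
    have h1 : ringChar Fq = p :=
      (Nat.prime_dvd_prime_iff_eq hp' hp).mp (hp'.dvd_of_dvd_pow hdvd)
    obtain ⟨k, -, hk⟩ := FiniteField.card Fq (ringChar Fq)
    apply hq
    rw [hqdef, hk, ← h1]
    exact dvd_pow_self _ (by positivity)
  have hsep : (X ^ P - 1 : Fq[X]).Separable := by
    have := Polynomial.separable_X_pow_sub_C (F := Fq) (1 : Fq) hPne one_ne_zero
    simpa using this
  have hsf : Squarefree (X ^ P - 1 : Fq[X]) := hsep.squarefree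
  have hmonic : (X ^ P - 1 : Fq[X]).Monic := by
    have := monic_X_pow_sub_C (1 : Fq) hP0.ne'
    simpa using this
  have h0 : (X ^ P - 1 : Fq[X]) ≠ 0 := hmonic.ne_zero
  have hdeg : (X ^ P - 1 : Fq[X]).natDegree = P := by
    have := natDegree_X_pow_sub_C (n := P) (r := (1 : Fq))
    simpa using this
  set M := UniqueFactorizationMonoid.normalizedFactors (X ^ P - 1 : Fq[X]) with hM
  have hnodup : M.Nodup :=
    (UniqueFactorizationMonoid.squarefree_iff_nodup_normalizedFactors h0).mp hsf
  have hmem : ∀ g : Fq[X], g ∈ M ↔ g.Monic ∧ Irreducible g ∧ g ∣ (X ^ P - 1) := by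
    intro g
    constructor
    · intro hg
      have hirr := UniqueFactorizationMonoid.irreducible_of_normalized_factor g hg
      have hnorm := UniqueFactorizationMonoid.normalize_normalized_factor g hg
      have hgm : g.Monic := hnorm ▸ Polynomial.monic_normalize hirr.ne_zero
      exact ⟨hgm, hirr, UniqueFactorizationMonoid.dvd_of_mem_normalizedFactors hg⟩
    · rintro ⟨hgm, hgi, hgd⟩
      obtain ⟨w, hwmem, hw⟩ :=
        UniqueFactorizationMonoid.exists_mem_normalizedFactors_of_dvd h0 hgi hgd
      have hwm : w.Monic :=
        (UniqueFactorizationMonoid.normalize_normalized_factor _ hwmem) ▸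
          Polynomial.monic_normalize
            (UniqueFactorizationMonoid.irreducible_of_normalized_factor _ hwmem).ne_zero
      rwa [Polynomial.eq_of_monic_of_associated hgm hwm hw]
  have hprodmonic : M.prod.Monic := by
    have := Polynomial.monic_multiset_prod_of_monic M id (fun g hg => ((hmem g).mp hg).1)
    simpa using this
  have hprod : M.prod = X ^ P - 1 :=
    Polynomial.eq_of_monic_of_associated hprodmonic hmonic
      (UniqueFactorizationMonoid.prod_normalizedFactors h0)
  have hsum : (M.map natDegree).sum = P := by
    rw [← Polynomial.natDegree_multiset_prod_of_monic _ (fun g hg => ((hmem g).mp hg).1),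
      hprod, hdeg]
  set F : Finset (Fq[X]) := ⟨M, hnodup⟩ with hF
  have hFmem : ∀ g : Fq[X], g ∈ F ↔ g ∈ M := fun g => Iff.rfl
  have hFsum : ∑ g ∈ F, g.natDegree = P := hsum
  have hchar := factor_char hp hq hn (Fq := Fq)
  have hmaps : ∀ g ∈ F, g.natDegree ∈ n.divisors := by
    intro g hg
    obtain ⟨hgm, hgi, hgd⟩ := (hmem g).mp hg
    have := (hchar g).mpr ⟨hgm, hgi, hgd⟩
    exact Nat.mem_divisors.mpr ⟨this.2.2.1, by omega⟩
  have hfib := Finset.sum_fiberwise_of_maps_to hmaps (fun g => g.natDegree)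
  have hcount : ∀ d ∈ n.divisors, (F.filter fun g => g.natDegree = d).card
      = numIrredPPowerOrder Fq p d := by
    intro d hd
    obtain ⟨hddvd, -⟩ := Nat.mem_divisors.mp hd
    have hpred : ∀ f : Fq[X],
        (f.Monic ∧ Irreducible f ∧ f.natDegree = d ∧
          ∃ m : ℕ, sInf {e : ℕ | 0 < e ∧ f ∣ X ^ e - 1} = p ^ m)
        ↔ f ∈ F.filter fun g => g.natDegree = d := by
      intro f
      rw [Finset.mem_filter, hFmem, hmem]
      constructor
      · rintro ⟨hfm, hfi, hfd, m, hord⟩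
        have := (hchar f).mp ⟨hfm, hfi, hfd ▸ hddvd, m, hord⟩
        exact ⟨⟨this.1, this.2.1, this.2.2⟩, hfd⟩
      · rintro ⟨⟨hfm, hfi, hfd⟩, hdeg'⟩
        obtain ⟨-, -, -, hex⟩ := (hchar f).mpr ⟨hfm, hfi, hfd⟩
        exact ⟨hfm, hfi, hdeg', hex⟩
    rw [numIrredPPowerOrder]
    rw [Nat.card_congr (Equiv.subtypeEquivRight (fun f => hpred f))]
    rw [Nat.card_eq_finsetCard]
  calc P = ∑ g ∈ F, g.natDegree := hFsum.symm
    _ = ∑ d ∈ n.divisors, ∑ g ∈ F.filter (fun g => g.natDegree = d), g.natDegree := hfib.symm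
    _ = ∑ d ∈ n.divisors, d * numIrredPPowerOrder Fq p d := by
        refine Finset.sum_congr rfl (fun d hd => ?_)
        rw [Finset.sum_congr rfl (fun g hg => (Finset.mem_filter.mp hg).2),
          Finset.sum_const, smul_eq_mul, hcount d hd, mul_comm]
end
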